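/- arXiv:0801.2095 — 6 statements merged into one kernel-verified Lean document; each statement's English description precedes it below -/
import Mathlib

section
/- Let w : ℝⁿ → ℝ be a function and x ∈ ℝⁿ. Then w is differentiable at x if and only if there exist C¹ functions f, g : ℝⁿ → ℝ and a neighborhood V of x such that f(x) = g(x) and for all y ∈ V, g(y) ≤ w(y) ≤ f(y). -/
open Topology MeasureTheory intervalIntegral Set

set_option maxHeartbeats 1000000
set_option synthInstance.maxHeartbeats 400000

noncomputable def Gfun (ρ : ℝ → ℝ) : ℝ → ℝ := fun t => ∫ s in (0:ℝ)..t, ρ s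
noncomputable def gfun (ρ : ℝ → ℝ) : ℝ → ℝ := fun s => (Gfun ρ (2*s) - Gfun ρ s) / s
noncomputable def G2fun (ρ : ℝ → ℝ) : ℝ → ℝ := fun r => ∫ s in (1:ℝ)..r, gfun ρ s
noncomputable def hfun (ρ : ℝ → ℝ) : ℝ → ℝ :=
  fun r => if r ≤ 0 then 0 else (G2fun ρ (2*r) - G2fun ρ r) / r
noncomputable def phifun (ρ : ℝ → ℝ) : ℝ → ℝ :=
  fun r => ((gfun ρ (2*r) * 2 - gfun ρ r) * r - (G2fun ρ (2*r) - G2fun ρ r) * 1) / r ^ 2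

variable {ρ : ℝ → ℝ}

lemma G_cont (hmono : Monotone ρ) : Continuous (Gfun ρ) :=
  intervalIntegral.continuous_primitive (fun _ _ => hmono.intervalIntegrable) 0

lemma G_sub (hmono : Monotone ρ) (s : ℝ) :
    Gfun ρ (2*s) - Gfun ρ s = ∫ t in s..(2*s), ρ t := by
  simpa [Gfun] using
    intervalIntegral.integral_interval_sub_left hmono.intervalIntegrable hmono.intervalIntegrable

lemma g_ge (hmono : Monotone ρ) {s : ℝ} (hs : 0 < s) : ρ s ≤ gfun ρ s := by
  have key : s * ρ s ≤ ∫ t in s..(2*s), ρ t := by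
    have : ∫ t in s..(2*s), ρ s ≤ ∫ t in s..(2*s), ρ t := by
      apply intervalIntegral.integral_mono_on (by linarith)
        intervalIntegrable_const hmono.intervalIntegrable
      exact fun t ht => hmono ht.1
    refine this.trans_eq' ?_
    rw [intervalIntegral.integral_const, smul_eq_mul]
    ring
  rw [gfun, G_sub hmono, le_div_iff₀ hs]
  linarith [key]

lemma g_le (hmono : Monotone ρ) {s : ℝ} (hs : 0 < s) : gfun ρ s ≤ ρ (2*s) := by
  have key : (∫ t in s..(2*s), ρ t) ≤ s * ρ (2*s) := by
    have : ∫ t in s..(2*s), ρ t ≤ ∫ t in s..(2*s), ρ (2*s) := by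
      apply intervalIntegral.integral_mono_on (by linarith)
        hmono.intervalIntegrable intervalIntegrable_const
      exact fun t ht => hmono ht.2
    refine this.trans ?_
    rw [intervalIntegral.integral_const, smul_eq_mul]
    exact le_of_eq (by ring)
  rw [gfun, G_sub hmono, div_le_iff₀ hs]
  linarith [key]

lemma g_contOn (hmono : Monotone ρ) : ContinuousOn (gfun ρ) (Ioi 0) := by
  apply ContinuousOn.div
  · exact (((G_cont hmono).comp (continuous_const.mul continuous_id)).sub (G_cont hmono)).continuousOn
  · exact continuous_id.continuousOn
  · exact fun s hs => ne_of_gt hs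

lemma g_intble (hmono : Monotone ρ) {a b : ℝ} (ha : 0 < a) (hb : 0 < b) :
    IntervalIntegrable (gfun ρ) volume a b := by
  apply ContinuousOn.intervalIntegrable
  apply (g_contOn hmono).mono
  rw [uIcc_eq_union]
  intro t ht
  rcases ht with ht | ht
  · exact lt_of_lt_of_le ha ht.1
  · exact lt_of_lt_of_le hb ht.1

lemma G2_hasDeriv (hmono : Monotone ρ) {r : ℝ} (hr : 0 < r) :
    HasDerivAt (G2fun ρ) (gfun ρ r) r := by
  apply intervalIntegral.integral_hasDerivAt_right (g_intble hmono one_pos hr)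
    ((g_contOn hmono).stronglyMeasurableAtFilter isOpen_Ioi r hr)
    ((g_contOn hmono).continuousAt (Ioi_mem_nhds hr))

lemma hq_hasDeriv (hmono : Monotone ρ) {r : ℝ} (hr : 0 < r) :
    HasDerivAt (fun t => (G2fun ρ (2*t) - G2fun ρ t) / t) (phifun ρ r) r := by
  have h2 : HasDerivAt (fun t : ℝ => G2fun ρ (2*t)) (gfun ρ (2*r) * 2) r := by
    have := (G2_hasDeriv hmono (by linarith : (0:ℝ) < 2*r)).comp r
      ((hasDerivAt_id r).const_mul 2)
    simpa [Function.comp_def, mul_comm] using this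
  exact (h2.sub (G2_hasDeriv hmono hr)).div (hasDerivAt_id r) (ne_of_gt hr)

lemma h_hasDeriv (hmono : Monotone ρ) {r : ℝ} (hr : 0 < r) :
    HasDerivAt (hfun ρ) (phifun ρ r) r := by
  apply (hq_hasDeriv hmono hr).congr_of_eventuallyEq
  filter_upwards [Ioi_mem_nhds hr] with t ht
  simp [hfun, not_le.2 (show (0:ℝ) < t from ht)]

lemma phi_contAt (hmono : Monotone ρ) {r : ℝ} (hr : 0 < r) :
    ContinuousAt (phifun ρ) r := by
  have hg2 : ContinuousAt (fun t : ℝ => gfun ρ (2*t)) r :=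
    ((g_contOn hmono).continuousAt (Ioi_mem_nhds (by linarith : (0:ℝ) < 2*r))).comp
      ((continuous_const.mul continuous_id).continuousAt)
  have hg1 : ContinuousAt (gfun ρ) r := (g_contOn hmono).continuousAt (Ioi_mem_nhds hr)
  have hG2a : ContinuousAt (fun t : ℝ => G2fun ρ (2*t)) r :=
    ((G2_hasDeriv hmono (by linarith : (0:ℝ) < 2*r)).continuousAt).comp
      ((continuous_const.mul continuous_id).continuousAt)
  have hG2b : ContinuousAt (G2fun ρ) r := (G2_hasDeriv hmono hr).continuousAt
  exact (((hg2.mul continuousAt_const).sub hg1).mul continuousAt_id |>.sub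
    ((hG2a.sub hG2b).mul continuousAt_const)).div (continuousAt_id.pow 2) (by positivity)

lemma G2_sub (hmono : Monotone ρ) {r : ℝ} (hr : 0 < r) :
    G2fun ρ (2*r) - G2fun ρ r = ∫ t in r..(2*r), gfun ρ t := by
  simpa [G2fun] using intervalIntegral.integral_interval_sub_left
    (g_intble hmono one_pos (by linarith)) (g_intble hmono one_pos hr)

lemma h_ge (hmono : Monotone ρ) {r : ℝ} (hr : 0 < r) : ρ r ≤ hfun ρ r := by
  have key : r * ρ r ≤ ∫ t in r..(2*r), gfun ρ t := by
    have : ∫ t in r..(2*r), ρ r ≤ ∫ t in r..(2*r), gfun ρ t := by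
      apply intervalIntegral.integral_mono_on (by linarith) intervalIntegrable_const
        (g_intble hmono hr (by linarith))
      intro t ht
      exact (hmono ht.1).trans (g_ge hmono (lt_of_lt_of_le hr ht.1))
    refine this.trans_eq' ?_
    rw [intervalIntegral.integral_const, smul_eq_mul]; ring
  rw [hfun]
  rw [if_neg (not_le.2 hr), G2_sub hmono hr, le_div_iff₀ hr]
  linarith

lemma h_le (hmono : Monotone ρ) (hnn : ∀ r, 0 ≤ ρ r) {r : ℝ} (hr : 0 < r) :
    hfun ρ r ≤ ρ (4*r) := by
  have key : (∫ t in r..(2*r), gfun ρ t) ≤ r * ρ (4*r) := by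
    have : ∫ t in r..(2*r), gfun ρ t ≤ ∫ t in r..(2*r), ρ (4*r) := by
      apply intervalIntegral.integral_mono_on (by linarith)
        (g_intble hmono hr (by linarith)) intervalIntegrable_const
      intro t ht
      have ht0 : 0 < t := lt_of_lt_of_le hr ht.1
      exact (g_le hmono ht0).trans (hmono (by linarith [ht.2]))
    refine this.trans ?_
    rw [intervalIntegral.integral_const, smul_eq_mul]
    exact le_of_eq (by ring)
  rw [hfun, if_neg (not_le.2 hr), G2_sub hmono hr, div_le_iff₀ hr]
  linarith

lemma h_nonneg (hmono : Monotone ρ) (hnn : ∀ r, 0 ≤ ρ r) (r : ℝ) : 0 ≤ hfun ρ r := by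
  rcases le_or_gt r 0 with h | h
  · simp [hfun, h]
  · exact (hnn r).trans (h_ge hmono h)

lemma h_small (hmono : Monotone ρ) (hnn : ∀ r, 0 ≤ ρ r)
    (hsmall : ∀ ε > 0, ∃ δ > 0, ∀ r, 0 ≤ r → r ≤ δ → ρ r ≤ ε * r) :
    ∀ ε > 0, ∃ δ > 0, ∀ r, 0 < r → r ≤ δ →
      hfun ρ r ≤ ε * r ∧ |phifun ρ r| ≤ ε := by
  intro ε hε
  obtain ⟨δ', hδ', hδ⟩ := hsmall (ε/20) (by linarith)
  refine ⟨δ'/4, by linarith, fun r hr hrδ => ?_⟩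
  have h4 : ρ (4*r) ≤ ε/20 * (4*r) := hδ _ (by linarith) (by linarith)
  have hh : hfun ρ r ≤ ε/20 * (4*r) := (h_le hmono hnn hr).trans h4
  constructor
  · nlinarith
  · have hg2 : gfun ρ (2*r) ≤ ε/20 * (4*r) :=
      (g_le hmono (by linarith)).trans (by simpa [show 2*(2*r) = 4*r by ring] using h4)
    have hg1 : gfun ρ r ≤ ε/20 * (2*r) :=
      (g_le hmono hr).trans (hδ _ (by linarith) (by linarith))
    have hg2n : 0 ≤ gfun ρ (2*r) := (hnn _).trans (g_ge hmono (by linarith))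
    have hg1n : 0 ≤ gfun ρ r := (hnn _).trans (g_ge hmono hr)
    have hNnn : 0 ≤ G2fun ρ (2*r) - G2fun ρ r := by
      rw [G2_sub hmono hr]
      apply intervalIntegral.integral_nonneg (by linarith)
      exact fun u hu => (hnn u).trans (g_ge hmono (lt_of_lt_of_le hr hu.1))
    have hNle : G2fun ρ (2*r) - G2fun ρ r ≤ (ε/20 * (4*r)) * r := by
      have := hh
      rw [hfun, if_neg (not_le.2 hr), div_le_iff₀ hr] at this
      exact this
    rw [phifun, abs_div, abs_of_nonneg (sq_nonneg r), div_le_iff₀ (by positivity)]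
    have habs : |(gfun ρ (2*r) * 2 - gfun ρ r) * r - (G2fun ρ (2*r) - G2fun ρ r) * 1|
        ≤ ((ε/20*(4*r))*2 + ε/20*(2*r))*r + (ε/20 * (4*r))*r := by
      apply abs_le.2
      constructor <;> nlinarith
    nlinarith

variable {E : Type*} [NormedAddCommGroup E] [InnerProductSpace ℝ E]

lemma norm_hasFDeriv {y : E} (hy : y ≠ 0) :
    HasFDerivAt (fun z : E => ‖z‖) (‖y‖⁻¹ • innerSL ℝ y) y := by
  have h1 : HasFDerivAt (fun z : E => ‖z‖^2) (2 • innerSL ℝ y) y :=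
    (hasStrictFDerivAt_norm_sq y).hasFDerivAt
  have hy2 : (‖y‖^2 : ℝ) ≠ 0 := pow_ne_zero 2 (norm_ne_zero_iff.2 hy)
  have h2 : HasDerivAt Real.sqrt (1/(2*Real.sqrt (‖y‖^2))) (‖y‖^2) :=
    Real.hasDerivAt_sqrt hy2
  have h3 := h2.comp_hasFDerivAt y h1
  simp only [Function.comp_def] at h3
  have he : (fun z : E => Real.sqrt (‖z‖^2)) = fun z : E => ‖z‖ := by
    funext z; rw [Real.sqrt_sq (norm_nonneg z)]
  rw [he] at h3
  have harr : (1/(2*Real.sqrt (‖y‖^2))) • (2 • innerSL ℝ y) = ‖y‖⁻¹ • innerSL ℝ y := by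
    have hn : ‖y‖ ≠ 0 := norm_ne_zero_iff.2 hy
    rw [Real.sqrt_sq (norm_nonneg y)]
    ext z
    simp only [ContinuousLinearMap.smul_apply, smul_eq_mul, ContinuousLinearMap.coe_smul',
      Pi.smul_apply]
    field_simp
    ring
  rw [harr] at h3
  exact h3

lemma Phi_hasFDeriv_ne (hmono : Monotone ρ) {y : E} (hy : y ≠ 0) :
    HasFDerivAt (fun z : E => hfun ρ ‖z‖)
      ((phifun ρ ‖y‖ * ‖y‖⁻¹) • innerSL ℝ y) y := by
  have := (h_hasDeriv hmono (norm_pos_iff.2 hy)).comp_hasFDerivAt y (norm_hasFDeriv hy)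
  simp only [Function.comp_def] at this
  rwa [smul_smul] at this

lemma Phi_hasFDeriv_zero (hmono : Monotone ρ) (hnn : ∀ r, 0 ≤ ρ r)
    (hsmall : ∀ ε > 0, ∃ δ > 0, ∀ r, 0 ≤ r → r ≤ δ → ρ r ≤ ε * r) :
    HasFDerivAt (fun z : E => hfun ρ ‖z‖) (0 : E →L[ℝ] ℝ) 0 := by
  rw [hasFDerivAt_iff_isLittleO_nhds_zero]
  rw [Asymptotics.isLittleO_iff]
  intro c hc
  obtain ⟨δ, hδ, hkey⟩ := h_small hmono hnn hsmall c hc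
  filter_upwards [Metric.ball_mem_nhds 0 hδ] with z hz
  rw [mem_ball_zero_iff] at hz
  rcases eq_or_ne z 0 with rfl | hz0
  · simp [hfun]
  · have hpos : 0 < ‖z‖ := norm_pos_iff.2 hz0
    have := (hkey ‖z‖ hpos hz.le).1
    simp only [zero_add, ContinuousLinearMap.zero_apply, sub_zero]
    rw [show hfun ρ ‖z‖ - hfun ρ ‖(0:E)‖ = hfun ρ ‖z‖ by simp [hfun]]
    rw [Real.norm_eq_abs, abs_of_nonneg (h_nonneg hmono hnn _)]
    linarith

lemma Phi_contDiff (hmono : Monotone ρ) (hnn : ∀ r, 0 ≤ ρ r)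
    (hsmall : ∀ ε > 0, ∃ δ > 0, ∀ r, 0 ≤ r → r ≤ δ → ρ r ≤ ε * r) :
    ContDiff ℝ 1 (fun z : E => hfun ρ ‖z‖) := by
  set A : E → (E →L[ℝ] ℝ) := fun y => (phifun ρ ‖y‖ * ‖y‖⁻¹) • innerSL ℝ y with hA
  have hA0 : A 0 = 0 := by simp [hA]
  have hdiff : Differentiable ℝ (fun z : E => hfun ρ ‖z‖) := by
    intro y
    rcases eq_or_ne y 0 with rfl | hy
    · exact (Phi_hasFDeriv_zero hmono hnn hsmall).differentiableAt
    · exact (Phi_hasFDeriv_ne hmono hy).differentiableAt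
  have hfd : fderiv ℝ (fun z : E => hfun ρ ‖z‖) = A := by
    funext y
    rcases eq_or_ne y 0 with rfl | hy
    · rw [(Phi_hasFDeriv_zero hmono hnn hsmall).fderiv, hA0]
    · exact (Phi_hasFDeriv_ne hmono hy).fderiv
  have hcont : Continuous A := by
    rw [continuous_iff_continuousAt]
    intro y
    rcases eq_or_ne y 0 with rfl | hy
    · rw [ContinuousAt, hA0]
      rw [NormedAddCommGroup.tendsto_nhds_zero]
      intro ε hε
      obtain ⟨δ, hδ, hkey⟩ := h_small hmono hnn hsmall (ε/2) (by linarith)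
      filter_upwards [Metric.ball_mem_nhds 0 hδ] with z hz
      rw [mem_ball_zero_iff] at hz
      rcases eq_or_ne z 0 with rfl | hz0
      · rw [hA0]; simpa using hε
      · have hpos : 0 < ‖z‖ := norm_pos_iff.2 hz0
        have hb := (hkey ‖z‖ hpos hz.le).2
        have : ‖A z‖ = |phifun ρ ‖z‖| := by
          rw [hA]
          show ‖(phifun ρ ‖z‖ * ‖z‖⁻¹) • innerSL ℝ z‖ = _
          rw [norm_smul (phifun ρ ‖z‖ * ‖z‖⁻¹) (innerSL ℝ z), innerSL_apply_norm,
            Real.norm_eq_abs, abs_mul, abs_inv, abs_norm,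
            mul_assoc, inv_mul_cancel₀ (ne_of_gt hpos), mul_one]
        rw [this]; linarith
    · have hn : ‖y‖ ≠ 0 := norm_ne_zero_iff.2 hy
      apply ContinuousAt.fun_smul
      · exact (((phi_contAt hmono (norm_pos_iff.2 hy)).comp
          continuous_norm.continuousAt).mul (continuous_norm.continuousAt.inv₀ hn))
      · exact (innerSL ℝ).continuous.continuousAt
  exact contDiff_one_iff_fderiv.2 ⟨hdiff, hfd ▸ hcont⟩

theorem stmt0 {n : ℕ} (w : EuclideanSpace ℝ (Fin n) → ℝ) (x : EuclideanSpace ℝ (Fin n)) :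
    DifferentiableAt ℝ w x ↔
      ∃ f g : EuclideanSpace ℝ (Fin n) → ℝ, ContDiff ℝ 1 f ∧ ContDiff ℝ 1 g ∧
        f x = g x ∧ ∀ᶠ y in 𝓝 x, g y ≤ w y ∧ w y ≤ f y := by
  constructor
  · intro hd
    set L := fderiv ℝ w x with hLdef
    have hL : HasFDerivAt w L x := hd.hasFDerivAt
    have hlo := hL.isLittleO
    have hmod : ∀ ε > 0, ∃ δ > 0, ∀ y, ‖y - x‖ ≤ δ →
        |w y - w x - L (y - x)| ≤ ε * ‖y - x‖ := by
      intro ε hε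
      have h := hlo.def hε
      rw [Metric.eventually_nhds_iff] at h
      obtain ⟨δ, hδ, hh⟩ := h
      refine ⟨δ/2, by linarith, fun y hy => ?_⟩
      have := hh (show dist y x < δ by rw [dist_eq_norm]; linarith)
      simpa [Real.norm_eq_abs] using this
    obtain ⟨δ₁, hδ₁, h1⟩ := hmod 1 one_pos
    set e : EuclideanSpace ℝ (Fin n) → ℝ := fun y => |w y - w x - L (y - x)| with hedef
    have hex : e x = 0 := by simp [hedef]
    set ρ : ℝ → ℝ := fun r => sSup (e '' Metric.closedBall x (min r δ₁)) with hρdef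
    have hbdd : ∀ r, BddAbove (e '' Metric.closedBall x (min r δ₁)) := by
      intro r
      refine ⟨δ₁, ?_⟩
      rintro v ⟨y, hy, rfl⟩
      rw [Metric.mem_closedBall, dist_eq_norm] at hy
      have := h1 y (hy.trans (min_le_right _ _))
      simp only [one_mul] at this
      exact this.trans (hy.trans (min_le_right _ _))
    have hnn : ∀ r, 0 ≤ ρ r := by
      intro r
      rcases lt_or_ge (min r δ₁) 0 with h | h
      · rw [hρdef]
        simp [Metric.closedBall_eq_empty.2 h, Real.sSup_empty]
      · have hx : x ∈ Metric.closedBall x (min r δ₁) := by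
          simp [Metric.mem_closedBall, h]
        have := le_csSup (hbdd r) ⟨x, hx, rfl⟩
        rw [hex] at this
        exact this
    have hmono : Monotone ρ := by
      intro a b hab
      rcases lt_or_ge (min a δ₁) 0 with h | h
      · rw [hρdef]
        simp only
        rw [Metric.closedBall_eq_empty.2 h]
        simp [Real.sSup_empty]
        exact hnn b
      · apply csSup_le_csSup (hbdd b)
        · exact ⟨e x, x, by simp [Metric.mem_closedBall, h], rfl⟩
        · exact Set.image_mono (Metric.closedBall_subset_closedBall
            (min_le_min hab le_rfl))
    have hsmall : ∀ ε > 0, ∃ δ > 0, ∀ r, 0 ≤ r → r ≤ δ → ρ r ≤ ε * r := by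
      intro ε hε
      obtain ⟨δ₂, hδ₂, h2⟩ := hmod ε hε
      refine ⟨δ₂, hδ₂, fun r hr hrδ => ?_⟩
      apply csSup_le
      · exact ⟨e x, x, by simp only [Metric.mem_closedBall, dist_self]; exact le_min hr hδ₁.le, rfl⟩
      · rintro v ⟨y, hy, rfl⟩
        rw [Metric.mem_closedBall, dist_eq_norm] at hy
        have hyr : ‖y - x‖ ≤ r := hy.trans (min_le_left _ _)
        have := h2 y (hyr.trans hrδ)
        exact this.trans (by nlinarith)
    have hub : ∀ y, ‖y - x‖ ≤ δ₁ → e y ≤ ρ ‖y - x‖ := by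
      intro y hy
      apply le_csSup (hbdd _)
      exact ⟨y, by rw [Metric.mem_closedBall, dist_eq_norm]; exact le_min le_rfl hy, rfl⟩
    refine ⟨fun y => w x + L (y - x) + hfun ρ ‖y - x‖,
      fun y => w x + L (y - x) - hfun ρ ‖y - x‖, ?_, ?_, ?_, ?_⟩
    · exact (contDiff_const.add (L.contDiff.comp (contDiff_id.sub contDiff_const))).add
        ((Phi_contDiff hmono hnn hsmall).comp (contDiff_id.sub contDiff_const))
    · exact (contDiff_const.add (L.contDiff.comp (contDiff_id.sub contDiff_const))).sub
        ((Phi_contDiff hmono hnn hsmall).comp (contDiff_id.sub contDiff_const))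
    · simp [hfun]
    · filter_upwards [Metric.closedBall_mem_nhds x hδ₁] with y hy
      rw [Metric.mem_closedBall, dist_eq_norm] at hy
      have key : e y ≤ hfun ρ ‖y - x‖ := by
        rcases eq_or_ne y x with rfl | hne
        · simp [hex, hfun]
        · have hpos : 0 < ‖y - x‖ := by
            rw [norm_pos_iff, sub_ne_zero]; exact hne
          exact (hub y hy).trans (h_ge hmono hpos)
      rw [hedef] at key
      simp only [abs_le] at key
      constructor <;> [linarith [key.1]; linarith [key.2]]
  · rintro ⟨f, g, hf, hg, hfg, hev⟩
    have hx : g x ≤ w x ∧ w x ≤ f x := hev.self_of_nhds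
    have hwf : w x = f x := le_antisymm hx.2 (by rw [hfg] at hx ⊢; exact hx.1)
    have hwg : w x = g x := by rw [hwf, hfg]
    have hdf : Differentiable ℝ f := hf.differentiable one_ne_zero
    have hdg : Differentiable ℝ g := hg.differentiable one_ne_zero
    have hloc : IsLocalMin (fun y => f y - g y) x := by
      filter_upwards [hev] with y hy
      have : f x - g x = 0 := by rw [hfg]; ring
      rw [this]
      linarith [hy.1, hy.2]
    have h0 := hloc.fderiv_eq_zero
    rw [fderiv_fun_sub (hdf x) (hdg x), sub_eq_zero] at h0
    set L := fderiv ℝ f x with hLdef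
    have hwL : HasFDerivAt w L x := by
      refine hasFDerivAt_iff_isLittleO.2 (Asymptotics.isLittleO_iff.2 ?_)
      intro c hc
      have hfo := (hdf x).hasFDerivAt |> hasFDerivAt_iff_isLittleO.1 |>.def (half_pos hc)
      have hgo := (hdg x).hasFDerivAt |> hasFDerivAt_iff_isLittleO.1 |>.def (half_pos hc)
      rw [← h0] at hgo
      filter_upwards [hfo, hgo, hev] with y hfy hgy hy
      rw [Real.norm_eq_abs] at hfy hgy ⊢
      rw [abs_le] at hfy hgy
      rw [abs_le]
      have hn : (0:ℝ) ≤ ‖y - x‖ := norm_nonneg _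
      constructor
      · nlinarith [hy.1, hgy.1, hgy.2]
      · nlinarith [hy.2, hfy.1, hfy.2]
    exact hwL.differentiableAt
end

section
/- Let w : ℝⁿ → ℝ be a function that is differentiable almost everywhere (with respect to Lebesgue measure). Let A = w⁻¹({0}) and B = {x : w is differentiable at x and ∇w(x) ≠ 0}. Then the Lebesgue measure of A ∩ B is zero. -/
open MeasureTheory Metric Set Filter Topology Pointwise

/-- If `x` is a density point of a set `s` on which `w` vanishes, `w x = 0`, and `w` is
differentiable at `x`, then `fderiv ℝ w x = 0`. -/
lemma fderiv_eq_zero_of_density_one {n : ℕ} (w : EuclideanSpace ℝ (Fin n) → ℝ)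
    {s : Set (EuclideanSpace ℝ (Fin n))} (hs : ∀ y ∈ s, w y = 0)
    {x : EuclideanSpace ℝ (Fin n)} (hxs : x ∈ s)
    (hx : Tendsto (fun r => volume (s ∩ closedBall x r) / volume (closedBall x r))
      (𝓝[>] 0) (𝓝 1))
    (hd : DifferentiableAt ℝ w x) : fderiv ℝ w x = 0 := by
  set L := fderiv ℝ w x with hL
  have hwx : w x = 0 := hs x hxs
  ext z
  show L z = 0
  have main : ∀ ε : ℝ, 0 < ε → ‖L z‖ ≤ ε * (‖z‖ + ε) + ‖L‖ * ε := by
    intro ε εpos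
    obtain ⟨ρ, ρpos, hρ⟩ : ∃ ρ > 0, ∀ y ∈ ball x ρ,
        ‖w y - w x - L (y - x)‖ ≤ ε * ‖y - x‖ := by
      have := hd.hasFDerivAt.isLittleO.def εpos
      rw [Metric.eventually_nhds_iff_ball] at this
      obtain ⟨ρ, ρpos, hρ⟩ := this
      exact ⟨ρ, ρpos, fun y hy => hρ y hy⟩
    have B₁ : ∀ᶠ r in 𝓝[>] (0 : ℝ), (s ∩ ({x} + r • closedBall z ε)).Nonempty :=
      Measure.eventually_nonempty_inter_smul_of_density_one volume s x hx _
        measurableSet_closedBall (measure_closedBall_pos volume z εpos).ne'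
    have B₂ : ∀ᶠ r in 𝓝[>] (0 : ℝ), {x} + r • closedBall z ε ⊆ ball x ρ :=
      nhdsWithin_le_nhds
        (eventually_singleton_add_smul_subset isBounded_closedBall (ball_mem_nhds x ρpos))
    obtain ⟨r, ⟨y, ys, hy⟩, rρ, rpos⟩ :
        ∃ r : ℝ, (s ∩ ({x} + r • closedBall z ε)).Nonempty ∧
          {x} + r • closedBall z ε ⊆ ball x ρ ∧ 0 < r :=
      (B₁.and (B₂.and self_mem_nhdsWithin)).exists
    obtain ⟨a, az, ya⟩ : ∃ a, a ∈ closedBall z ε ∧ y = x + r • a := by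
      simp only [mem_smul_set, image_add_left, mem_preimage, singleton_add] at hy
      rcases hy with ⟨a, az, ha⟩
      exact ⟨a, az, by simp only [ha, add_neg_cancel_left]⟩
    have norm_a : ‖a‖ ≤ ‖z‖ + ε :=
      calc ‖a‖ = ‖z + (a - z)‖ := by simp only [add_sub_cancel]
        _ ≤ ‖z‖ + ‖a - z‖ := norm_add_le _ _
        _ ≤ ‖z‖ + ε := add_le_add_right (mem_closedBall_iff_norm.1 az) _
    have yball : y ∈ ball x ρ := rρ hy
    have hwy : w y = 0 := hs y ys
    have I : r * ‖L a‖ ≤ r * (ε * (‖z‖ + ε)) := by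
      have : ‖L (y - x)‖ ≤ ε * ‖y - x‖ := by
        have := hρ y yball
        rwa [hwy, hwx, sub_zero, zero_sub, norm_neg] at this
      have hyx : y - x = r • a := by rw [ya]; abel
      rw [hyx] at this
      rw [L.map_smul, norm_smul, norm_smul, Real.norm_eq_abs, abs_of_nonneg rpos.le] at this
      calc r * ‖L a‖ ≤ ε * (r * ‖a‖) := this
        _ = r * (ε * ‖a‖) := by ring
        _ ≤ r * (ε * (‖z‖ + ε)) := by
            apply mul_le_mul_of_nonneg_left _ rpos.le
            exact mul_le_mul_of_nonneg_left norm_a εpos.le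
    have hLa : ‖L a‖ ≤ ε * (‖z‖ + ε) := le_of_mul_le_mul_left (by linarith [I]) rpos
    calc ‖L z‖ = ‖L a + L (z - a)‖ := by rw [← map_add, show a + (z - a) = z from by abel]
      _ ≤ ‖L a‖ + ‖L (z - a)‖ := norm_add_le _ _
      _ ≤ ε * (‖z‖ + ε) + ‖L‖ * ‖z - a‖ := add_le_add hLa (L.le_opNorm _)
      _ ≤ ε * (‖z‖ + ε) + ‖L‖ * ε := by
          refine add_le_add_right (mul_le_mul_of_nonneg_left ?_ (norm_nonneg L)) _
          rw [← neg_sub, norm_neg]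
          exact mem_closedBall_iff_norm.1 az
  have hle : ‖L z‖ ≤ 0 := by
    have htend : Tendsto (fun ε : ℝ => ε * (‖z‖ + ε) + ‖L‖ * ε) (𝓝[>] 0)
        (𝓝 (0 * (‖z‖ + 0) + ‖L‖ * 0)) :=
      Tendsto.mono_left (Continuous.tendsto (by fun_prop) 0) nhdsWithin_le_nhds
    simp only [zero_mul, mul_zero, add_zero] at htend
    apply le_of_tendsto_of_tendsto tendsto_const_nhds htend
    filter_upwards [self_mem_nhdsWithin] with ε hε using main ε hε
  simpa using le_antisymm hle (norm_nonneg _)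

theorem stmt2 {n : ℕ} (w : EuclideanSpace ℝ (Fin n) → ℝ)
    (hw : ∀ᵐ x ∂(volume : Measure (EuclideanSpace ℝ (Fin n))), DifferentiableAt ℝ w x) :
    volume (w ⁻¹' {0} ∩ {x | DifferentiableAt ℝ w x ∧ fderiv ℝ w x ≠ 0}) = 0 := by
  set s := w ⁻¹' {0} ∩ {x | DifferentiableAt ℝ w x ∧ fderiv ℝ w x ≠ 0} with hs
  have hvanish : ∀ y ∈ s, w y = 0 := fun y hy => hy.1
  have hae : ∀ᵐ x ∂(volume : Measure (EuclideanSpace ℝ (Fin n))).restrict s, x ∉ s := by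
    filter_upwards [Besicovitch.ae_tendsto_measure_inter_div
      (volume : Measure (EuclideanSpace ℝ (Fin n))) s] with x hx
    intro hxs
    exact hxs.2.2 (fderiv_eq_zero_of_density_one w hvanish hxs hx hxs.2.1)
  have h0 : (volume : Measure (EuclideanSpace ℝ (Fin n))).restrict s s = 0 := by
    rw [ae_iff] at hae
    simpa using hae
  rwa [Measure.restrict_apply_self] at h0
end

section
/- Let H and E be Hilbert spaces, g : H → E a continuous linear map, and B a nonempty bounded subset of E such that for every a ∈ H there exists b_a ∈ B with ⟨b_a, g(a)⟩ ≥ 0. Then there exists b in the closed convex hull of B such that ⟨b, g(a)⟩ = 0 for all a ∈ H. -/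
open Bornology Filter

/-- Nested nonempty closed bounded convex sets in a real Hilbert space have
nonempty intersection. -/
lemma nested_nonempty {F : Type*} [NormedAddCommGroup F] [InnerProductSpace ℝ F]
    [CompleteSpace F] (C : ℕ → Set F) (hne : ∀ n, (C n).Nonempty)
    (hcl : ∀ n, IsClosed (C n)) (hcv : ∀ n, Convex ℝ (C n))
    (hanti : ∀ m n, m ≤ n → C n ⊆ C m) (hbd : IsBounded (C 0)) :
    (⋂ n, C n).Nonempty := by
  have hproj : ∀ n : ℕ, ∃ v ∈ C n, ‖(0:F) - v‖ = ⨅ w : C n, ‖(0:F) - w‖ := fun n =>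
    exists_norm_eq_iInf_of_complete_convex (hne n) (hcl n).isComplete (hcv n) 0
  choose p hp hpnorm using hproj
  set d : ℕ → ℝ := fun n => ‖p n‖ with hd
  have hpn : ∀ n, ‖(0:F) - p n‖ = d n := by intro n; simp [hd]
  -- the infimum value bounds below the norm of any element of `C n`
  have hinf_le : ∀ n, ∀ x ∈ C n, d n ≤ ‖x‖ := by
    intro n x hx
    have h1 : (⨅ w : C n, ‖(0:F) - w‖) ≤ ‖(0:F) - x‖ := by
      apply ciInf_le ⟨0, Set.forall_mem_range.2 fun _ => norm_nonneg _⟩ (⟨x, hx⟩ : C n)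
    rw [← hpn n, hpnorm n]
    simpa using h1
  -- `d` is monotone
  have hmono : Monotone d := by
    intro m n hmn
    have := hinf_le m (p n) (hanti m n hmn (hp n))
    exact this
  -- `d` is bounded above
  obtain ⟨M, hM⟩ := hbd.exists_norm_le
  have hdM : ∀ n, d n ≤ M := fun n => hM _ (hanti 0 n (Nat.zero_le n) (hp n))
  set s : ℝ := ⨆ n, d n with hs
  have hds : ∀ n, d n ≤ s := fun n => le_ciSup ⟨M, Set.forall_mem_range.2 hdM⟩ n
  have hdnonneg : ∀ n, 0 ≤ d n := fun n => norm_nonneg _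
  have htend : Tendsto d atTop (nhds s) := tendsto_atTop_ciSup hmono ⟨M, Set.forall_mem_range.2 hdM⟩
  -- key estimate via parallelogram law
  have key : ∀ m n, m ≤ n → ‖p m - p n‖ ^ 2 ≤ 2 * (d n ^ 2 - d m ^ 2) := by
    intro m n hmn
    have hmid : (1/2 : ℝ) • p m + (1/2 : ℝ) • p n ∈ C m :=
      (hcv m) (hp m) (hanti m n hmn (hp n))
        (by norm_num : (0:ℝ) ≤ 1/2) (by norm_num : (0:ℝ) ≤ 1/2) (by norm_num)
    have hmid_norm : d m ≤ ‖(1/2 : ℝ) • p m + (1/2 : ℝ) • p n‖ := hinf_le m _ hmid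
    have hpar : ‖p m + p n‖ ^ 2 + ‖p m - p n‖ ^ 2 = 2 * (‖p m‖ ^ 2 + ‖p n‖ ^ 2) := by
      have := parallelogram_law_with_norm ℝ (p m) (p n)
      nlinarith [this]
    have hdm : d m = ‖p m‖ := rfl
    have hdn : d n = ‖p n‖ := rfl
    have h4 : (2 * d m) ^ 2 ≤ ‖p m + p n‖ ^ 2 := by
      have h2 : 2 * d m ≤ ‖p m + p n‖ := by
        have he : ‖(1/2 : ℝ) • p m + (1/2 : ℝ) • p n‖ = ‖p m + p n‖ / 2 := by
          rw [← smul_add, norm_smul]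
          simp [abs_of_nonneg]
          ring
        rw [he] at hmid_norm; linarith
      have := hdnonneg m
      nlinarith
    nlinarith [hpar, h4, hdm, hdn]
  -- the sequence is Cauchy
  have hcauchy : CauchySeq p := by
    rw [Metric.cauchySeq_iff']
    intro ε hε
    have hsq : Tendsto (fun n => d n ^ 2) atTop (nhds (s ^ 2)) := htend.pow 2
    have : ∀ᶠ n in atTop, s ^ 2 - d n ^ 2 < ε ^ 2 / 2 := by
      have := hsq.eventually (eventually_gt_nhds (by nlinarith : s ^ 2 - ε ^ 2 / 2 < s ^ 2))
      filter_upwards [this] with n hn; linarith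
    obtain ⟨N, hN⟩ := this.exists
    refine ⟨N, fun n hn => ?_⟩
    have h1 : ‖p n - p N‖ ^ 2 ≤ 2 * (d n ^ 2 - d N ^ 2) := by
      have := key N n hn
      rwa [← norm_neg, neg_sub] at this
    have h2 : d n ^ 2 ≤ s ^ 2 := by
      have := hds n; have := hdnonneg n; nlinarith
    have h3 : ‖p n - p N‖ ^ 2 < ε ^ 2 := by nlinarith
    have h4 : ‖p n - p N‖ < ε := by nlinarith [norm_nonneg (p n - p N)]
    simpa [dist_eq_norm] using h4
  obtain ⟨q, hq⟩ := cauchySeq_tendsto_of_complete hcauchy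
  refine ⟨q, Set.mem_iInter.2 fun m => ?_⟩
  exact (hcl m).mem_of_tendsto hq (eventually_atTop.2 ⟨m, fun n hn => hanti m n hn (hp n)⟩)

theorem stmt5 {H E : Type*} [NormedAddCommGroup H] [InnerProductSpace ℝ H] [CompleteSpace H]
    [NormedAddCommGroup E] [InnerProductSpace ℝ E] [CompleteSpace E]
    (g : H →L[ℝ] E) (B : Set E) (hne : B.Nonempty) (hbd : Bornology.IsBounded B)
    (hpos : ∀ a : H, ∃ b ∈ B, 0 ≤ (inner ℝ b (g a) : ℝ)) :
    ∃ b ∈ closure (convexHull ℝ B), ∀ a : H, (inner ℝ b (g a) : ℝ) = 0 := by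
  classical
  set V : Submodule ℝ E := (LinearMap.range (g : H →ₗ[ℝ] E)).topologicalClosure with hV
  haveI : CompleteSpace V :=
    (LinearMap.range (g : H →ₗ[ℝ] E)).isClosed_topologicalClosure.completeSpace_coe
  set Q : E →L[ℝ] E := V.subtypeL.comp (V.orthogonalProjectionOnto) with hQ
  have hQmem : ∀ x : E, Q x ∈ V := fun x => (V.orthogonalProjectionOnto x).2
  -- Step A: 0 is in the closure of Q '' (convexHull ℝ B)
  have stepA : (0:E) ∈ closure (Q '' (convexHull ℝ B)) := by
    by_contra h0
    obtain ⟨f, u, hfu, hfy⟩ := geometric_hahn_banach_point_closed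
      (((convex_convexHull ℝ B).linear_image Q.toLinearMap).closure) isClosed_closure h0
    have hu : 0 < u := by simpa using hfu
    set v : E := (InnerProductSpace.toDual ℝ E).symm f with hv
    have hvf : ∀ y : E, (inner ℝ v y : ℝ) = f y := fun y => by
      simp [hv, InnerProductSpace.toDual_symm_apply]
    obtain ⟨M, hMpos, hM⟩ : ∃ M : ℝ, 0 < M ∧ ∀ b ∈ B, ‖b‖ ≤ M := by
      obtain ⟨M0, hM0⟩ := hbd.exists_norm_le
      exact ⟨M0 + 1, by
        obtain ⟨b0, hb0⟩ := hne
        have := norm_nonneg b0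
        have := hM0 b0 hb0
        linarith, fun b hb => by have := hM0 b hb; linarith⟩
    -- every b ∈ B satisfies ⟪Q v, b⟫ > u
    have hQv : ∀ b ∈ B, u < (inner ℝ (Q v) b : ℝ) := by
      intro b hb
      have hmem : Q b ∈ closure (Q '' (convexHull ℝ B)) :=
        subset_closure ⟨b, subset_convexHull ℝ B hb, rfl⟩
      have := hfy _ hmem
      rw [← hvf (Q b)] at this
      have hsym : (inner ℝ v (Q b) : ℝ) = inner ℝ (Q v) b := by
        simp only [hQ, ContinuousLinearMap.comp_apply, Submodule.subtypeL_apply]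
        calc (inner ℝ v ((V.orthogonalProjectionOnto b : E)) : ℝ)
            = inner ℝ ((V.orthogonalProjectionOnto b : E)) v := real_inner_comm _ _
          _ = inner ℝ b ((V.orthogonalProjectionOnto v : E)) :=
              by simpa [Submodule.coe_orthogonalProjectionOnto_apply] using
                Submodule.inner_starProjection_left_eq_right V b v
          _ = inner ℝ ((V.orthogonalProjectionOnto v : E)) b := real_inner_comm _ _
      rwa [hsym] at this
    -- approximate -Q v by an element of the range of g
    have hQvV : -(Q v) ∈ (V : Set E) := V.neg_mem (hQmem v)
    have hQvcl : -(Q v) ∈ closure (LinearMap.range (g : H →ₗ[ℝ] E) : Set E) := by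
      rwa [hV, Submodule.topologicalClosure_coe] at hQvV
    obtain ⟨y, hy, hyd⟩ := Metric.mem_closure_iff.1 hQvcl (u / (2 * M)) (by positivity)
    obtain ⟨a, ha⟩ := hy
    obtain ⟨b, hbB, hbpos⟩ := hpos a
    have hga : ‖g a + Q v‖ < u / (2 * M) := by
      have ha' : g a = y := ha
      have heq : -(Q v) - g a = -(g a + Q v) := by abel
      have : dist (-(Q v)) y = ‖g a + Q v‖ := by
        rw [dist_eq_norm, ← ha', heq, norm_neg]
      rwa [this] at hyd
    have h1 : (inner ℝ b (g a + Q v) : ℝ) ≤ ‖b‖ * ‖g a + Q v‖ := real_inner_le_norm b _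
    have h2 : ‖b‖ * ‖g a + Q v‖ < M * (u / (2 * M)) := by
      have hb1 : ‖b‖ ≤ M := hM b hbB
      have := norm_nonneg (g a + Q v)
      nlinarith [norm_nonneg b]
    have h3 : M * (u / (2 * M)) = u / 2 := by field_simp
    have h4 : (inner ℝ b (Q v) : ℝ) > u := by rw [real_inner_comm]; exact hQv b hbB
    have h5 : (inner ℝ b (g a) : ℝ) = inner ℝ b (g a + Q v) - inner ℝ b (Q v) := by
      rw [inner_add_right]; ring
    rw [h5] at hbpos
    linarith [h1, h2, hbpos]
  -- Step B: nested sets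
  set K : Set E := closure (convexHull ℝ B) with hK
  have hKconv : Convex ℝ K := (convex_convexHull ℝ B).closure
  have hKcl : IsClosed K := isClosed_closure
  have hKbd : IsBounded K := (isBounded_convexHull.2 hbd).closure
  set C : ℕ → Set E := fun n => {x ∈ K | ‖Q x‖ ≤ 1 / (n + 1)} with hC
  have hCne : ∀ n, (C n).Nonempty := by
    intro n
    have hpos' : (0:ℝ) < 1 / (n + 1) := by positivity
    obtain ⟨y, hy, hyd⟩ := Metric.mem_closure_iff.1 stepA (1 / (n + 1)) hpos'
    obtain ⟨x, hx, rfl⟩ := hy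
    refine ⟨x, subset_closure hx, ?_⟩
    have : dist (0:E) (Q x) = ‖Q x‖ := by simp
    rw [this] at hyd; linarith
  have hCcl : ∀ n, IsClosed (C n) := by
    intro n
    exact hKcl.inter (isClosed_le (Q.continuous.norm) continuous_const)
  have hCcv : ∀ n, Convex ℝ (C n) := by
    intro n
    have h1 : Convex ℝ {x : E | ‖Q x‖ ≤ 1 / (n + 1)} := by
      have := (convex_closedBall (0:E) (1 / (n + 1))).linear_preimage (Q : E →ₗ[ℝ] E)
      convert this using 1
      ext x
      simp [Metric.mem_closedBall, dist_zero_right]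
    exact hKconv.inter h1
  have hCanti : ∀ m n, m ≤ n → C n ⊆ C m := by
    intro m n hmn x hx
    refine ⟨hx.1, le_trans hx.2 ?_⟩
    have hmn' : (m:ℝ) + 1 ≤ (n:ℝ) + 1 := by exact_mod_cast Nat.succ_le_succ hmn
    exact one_div_le_one_div_of_le (by positivity) hmn'
  have hCbd : IsBounded (C 0) := hKbd.subset fun x hx => hx.1
  obtain ⟨b, hb⟩ := nested_nonempty C hCne hCcl hCcv hCanti hCbd
  rw [Set.mem_iInter] at hb
  have hbK : b ∈ K := (hb 0).1
  have hQb : Q b = 0 := by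
    have : ‖Q b‖ = 0 := by
      refine le_antisymm ?_ (norm_nonneg _)
      refine le_of_forall_pos_le_add fun ε hε => ?_
      obtain ⟨n, hn⟩ := exists_nat_one_div_lt hε
      have := (hb n).2
      linarith
    simpa using this
  have hborth : b ∈ Vᗮ := by
    rw [← Submodule.orthogonalProjectionOnto_eq_zero_iff]
    have : (V.orthogonalProjectionOnto b : E) = 0 := by
      simpa [hQ] using hQb
    exact Subtype.ext (by simpa using this)
  refine ⟨b, hbK, fun a => ?_⟩
  have hga : g a ∈ V := (LinearMap.range (g : H →ₗ[ℝ] E)).le_topologicalClosure ⟨a, rfl⟩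
  have := hborth (g a) hga
  rw [real_inner_comm] at this
  exact this
end

section
/- Let S ⊂ ℝⁿ be a set with ℋⁿ⁻¹(∂S) < ∞, let X be a Lipschitz vector field with Lipschitz flow φ_t, and suppose Lip(φ_s) ≤ 2 for |s| ≤ s₀. Then for 0 ≤ t ≤ s₀, the symmetric difference Δ(φ_t(S), S) is contained in ⋃_{0 ≤ s ≤ t} φ_s(∂S), and consequently μ(Δ(φ_t(S), S)) ≤ t · max(2, M)ⁿ · ℋⁿ⁻¹(∂S), where M is a Lipschitz bound of (t, x) ↦ φ_t(x). -/
open MeasureTheory ENNReal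

open Set EMetric


lemma diam_prod_le {α β : Type*} [PseudoEMetricSpace α] [PseudoEMetricSpace β]
    (s : Set α) (u : Set β) :
    EMetric.diam (s ×ˢ u) ≤ max (EMetric.diam s) (EMetric.diam u) := by
  refine EMetric.diam_le fun p hp q hq => ?_
  rw [Prod.edist_eq]
  exact max_le_max (edist_le_diam_of_mem hp.1 hq.1) (edist_le_diam_of_mem hp.2 hq.2)

lemma prodIccHausdorff {E : Type*} [EMetricSpace E] [MeasurableSpace E] [BorelSpace E]
    [SecondCountableTopology E] (m : ℕ) (A : Set E) (hA : μH[(m:ℝ)] A ≠ ∞)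
    {t : ℝ} (ht : 0 ≤ t) :
    μH[((m:ℝ)+1)] ((Set.Icc (0:ℝ) t) ×ˢ A) ≤ ENNReal.ofReal t * μH[(m:ℝ)] A := by
  classical
  set μ : ℝ≥0∞ := μH[(m:ℝ)] A with hμdef
  refine ENNReal.le_of_forall_pos_le_add fun ε hε _ => ?_
  rw [MeasureTheory.Measure.hausdorffMeasure_apply]
  refine iSup₂_le fun r hr => ?_
  obtain ⟨r', hr'pos, hr'le⟩ : ∃ r' : ℝ, 0 < r' ∧ ENNReal.ofReal r' ≤ r := by
    rcases eq_or_ne r ⊤ with rfl | hne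
    · exact ⟨1, one_pos, le_top⟩
    · exact ⟨r.toReal, ENNReal.toReal_pos hr.ne' hne, by rw [ENNReal.ofReal_toReal hne]⟩
  set D : ℝ := 3 * t + 2 * μ.toReal + 6 with hDdef
  have hD : 0 < D := by positivity
  set θ : ℝ := min (min 1 ((ε : ℝ) / D)) r' with hθdef
  have hθpos : 0 < θ := by
    refine lt_min (lt_min one_pos ?_) hr'pos
    positivity
  have hθ1 : θ ≤ 1 := le_trans (min_le_left _ _) (min_le_left _ _)
  have hθε : θ * D ≤ (ε : ℝ) := by
    have h1 : θ ≤ (ε : ℝ) / D := le_trans (min_le_left _ _) (min_le_right _ _)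
    calc θ * D ≤ ((ε : ℝ) / D) * D := by nlinarith
      _ = (ε : ℝ) := by field_simp
  have hθr' : θ ≤ r' := min_le_right _ _
  -- extract a cover of A at scale θ
  have h1 : (⨅ (C : ℕ → Set E) (_ : A ⊆ ⋃ n, C n)
      (_ : ∀ n, EMetric.diam (C n) ≤ ENNReal.ofReal θ),
      ∑' n, ⨆ _ : (C n).Nonempty, EMetric.diam (C n) ^ (m:ℝ)) < μ + ENNReal.ofReal θ := by
    refine lt_of_le_of_lt ?_ (ENNReal.lt_add_right hA (ENNReal.ofReal_pos.2 hθpos).ne')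
    rw [hμdef, MeasureTheory.Measure.hausdorffMeasure_apply]
    exact le_iSup₂ (f := fun (r : ℝ≥0∞) (_ : 0 < r) => ⨅ (C : ℕ → Set E) (_ : A ⊆ ⋃ n, C n)
      (_ : ∀ n, EMetric.diam (C n) ≤ r), ∑' n, ⨆ _ : (C n).Nonempty, EMetric.diam (C n) ^ (m:ℝ))
      (ENNReal.ofReal θ) (ENNReal.ofReal_pos.2 hθpos)
  simp only [iInf_lt_iff] at h1
  obtain ⟨C, hCcov, hCdiam, hsum⟩ := h1
  -- interval lengths
  set δ : ℕ → ℝ := fun n => θ * (2⁻¹ : ℝ) ^ n with hδdef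
  have hδpos : ∀ n, 0 < δ n := fun n => by positivity
  have hδθ : ∀ n, δ n ≤ θ := fun n => by
    simp only [hδdef]
    have h1 : (2⁻¹ : ℝ) ^ n ≤ 1 := pow_le_one₀ (by norm_num) (by norm_num)
    have h2 : (0:ℝ) ≤ (2⁻¹ : ℝ) ^ n := by positivity
    nlinarith [hθpos]
  set l : ℕ → ℝ := fun n => max (EMetric.diam (C n)).toReal (δ n) with hldef
  have hlpos : ∀ n, 0 < l n := fun n => lt_max_of_lt_right (hδpos n)
  have hdiam_ne : ∀ n, EMetric.diam (C n) ≠ ∞ :=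
    fun n => ne_top_of_le_ne_top ENNReal.ofReal_ne_top (hCdiam n)
  have hlθ : ∀ n, l n ≤ θ := fun n =>
    max_le (ENNReal.toReal_le_of_le_ofReal hθpos.le (hCdiam n)) (hδθ n)
  have hLeq : ∀ n, ENNReal.ofReal (l n) = max (EMetric.diam (C n)) (ENNReal.ofReal (δ n)) := by
    intro n
    rw [hldef]
    rw [Monotone.map_max (f := ENNReal.ofReal) (fun a b hab => ENNReal.ofReal_le_ofReal hab),
      ENNReal.ofReal_toReal (hdiam_ne n)]
  have hdL : ∀ n, EMetric.diam (C n) ≤ ENNReal.ofReal (l n) := fun n => by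
    rw [hLeq n]; exact le_max_left _ _
  set N : ℕ → ℕ := fun n => ⌈t / l n⌉₊ + 1 with hNdef
  set T : ℕ × ℕ → Set (ℝ × E) := fun p =>
    if (C p.1).Nonempty ∧ p.2 < N p.1 then
      (Set.Icc ((p.2 : ℝ) * l p.1) ((p.2 + 1 : ℝ) * l p.1)) ×ˢ C p.1 else ∅ with hTdef
  have e : ℕ ≃ ℕ × ℕ := (Denumerable.eqv (ℕ × ℕ)).symm
  -- the cover property
  have hTcov : Set.Icc (0:ℝ) t ×ˢ A ⊆ ⋃ n, T (e n) := by
    rw [e.surjective.iUnion_comp]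
    rintro ⟨s, x⟩ ⟨hs, hx⟩
    obtain ⟨n, hn⟩ := Set.mem_iUnion.1 (hCcov hx)
    refine Set.mem_iUnion.2 ⟨(n, ⌊s / l n⌋₊), ?_⟩
    have hcond : (C n).Nonempty ∧ ⌊s / l n⌋₊ < N n := by
      refine ⟨⟨x, hn⟩, ?_⟩
      have h1 : ⌊s / l n⌋₊ ≤ ⌈t / l n⌉₊ := by
        refine le_trans (Nat.floor_le_floor ?_) (Nat.floor_le_ceil _)
        exact (div_le_div_iff_of_pos_right (hlpos n)).2 hs.2
      simp only [hNdef]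
      omega
    simp only [hTdef, hcond, if_true]
    refine ⟨⟨?_, ?_⟩, hn⟩
    · have hf : (⌊s / l n⌋₊ : ℝ) ≤ s / l n := Nat.floor_le (div_nonneg hs.1 (hlpos n).le)
      have hd : (s / l n) * l n = s := by field_simp [(hlpos n).ne']
      nlinarith [hlpos n]
    · have h2 : s / l n < (⌊s / l n⌋₊ : ℝ) + 1 := Nat.lt_floor_add_one _
      have hd : (s / l n) * l n = s := by field_simp [(hlpos n).ne']
      nlinarith [hlpos n]
  -- diameters small
  have hTdiam' : ∀ p, EMetric.diam (T p) ≤ ENNReal.ofReal (l p.1) := by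
    intro p
    simp only [hTdef]
    split_ifs with hcond
    · refine le_trans (diam_prod_le _ _) (max_le ?_ ?_)
      · rw [EMetric.diam, Real.ediam_Icc]
        refine ENNReal.ofReal_le_ofReal ?_
        ring_nf
        nlinarith [hlpos p.1]
      · exact hdL p.1
    · simp [EMetric.diam]
  have hTdiam : ∀ n, EMetric.diam (T (e n)) ≤ r := fun n =>
    le_trans (hTdiam' (e n)) <|
      le_trans (ENNReal.ofReal_le_ofReal (le_trans (hlθ _) hθr')) hr'le
  refine iInf₂_le_of_le (fun n => T (e n)) hTcov (iInf_le_of_le hTdiam ?_)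
  -- the sum bound
  have hstep1 : ∀ p : ℕ × ℕ, (⨆ _ : (T p).Nonempty, EMetric.diam (T p) ^ ((m:ℝ)+1)) ≤
      (if (C p.1).Nonempty ∧ p.2 < N p.1 then ENNReal.ofReal (l p.1) ^ ((m:ℝ)+1) else 0) := by
    intro p
    by_cases hcond : (C p.1).Nonempty ∧ p.2 < N p.1
    · simp only [hcond, if_true]
      exact iSup_le fun _ => ENNReal.rpow_le_rpow (hTdiam' p) (by positivity)
    · have hTe : T p = ∅ := by simp only [hTdef, hcond, if_false]
      simp [hTe]
  have hNl : ∀ n, (N n : ℝ≥0∞) * ENNReal.ofReal (l n) ≤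
      ENNReal.ofReal t + 2 * ENNReal.ofReal θ := by
    intro n
    have h1 : (N n : ℝ) * l n ≤ t + 2 * θ := by
      have hceil : (⌈t / l n⌉₊ : ℝ) < t / l n + 1 :=
        Nat.ceil_lt_add_one (div_nonneg ht (hlpos n).le)
      have hd : (t / l n) * l n = t := by field_simp [(hlpos n).ne']
      simp only [hNdef]
      push_cast
      nlinarith [hlpos n, hlθ n]
    calc (N n : ℝ≥0∞) * ENNReal.ofReal (l n) = ENNReal.ofReal ((N n : ℝ) * l n) := by
          rw [ENNReal.ofReal_mul (by positivity), ENNReal.ofReal_natCast]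
      _ ≤ ENNReal.ofReal (t + 2 * θ) := ENNReal.ofReal_le_ofReal h1
      _ = ENNReal.ofReal t + 2 * ENNReal.ofReal θ := by
          rw [ENNReal.ofReal_add ht (by positivity), ENNReal.ofReal_mul (by norm_num)]
          norm_num
  have hδsum : (∑' n, ENNReal.ofReal (δ n)) ≤ 2 * ENNReal.ofReal θ := by
    have h1 : ∀ n : ℕ, ENNReal.ofReal (δ n) = ENNReal.ofReal θ * (ENNReal.ofReal 2⁻¹) ^ n := by
      intro n
      simp only [hδdef]
      rw [ENNReal.ofReal_mul hθpos.le, ENNReal.ofReal_pow (by norm_num)]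
    rw [tsum_congr h1, ENNReal.tsum_mul_left]
    have h2 : (ENNReal.ofReal 2⁻¹ : ℝ≥0∞) = 2⁻¹ := by
      rw [ENNReal.ofReal_inv_of_pos (by norm_num)]
      norm_num
    rw [h2, ENNReal.tsum_geometric, ENNReal.one_sub_inv_two, inv_inv, mul_comm]
  have hLm : (∑' n, if (C n).Nonempty then ENNReal.ofReal (l n) ^ (m:ℝ) else 0) ≤
      μ + 3 * ENNReal.ofReal θ := by
    have hmono : Monotone (fun x : ℝ≥0∞ => x ^ (m:ℝ)) :=
      fun a b hab => ENNReal.rpow_le_rpow hab (Nat.cast_nonneg m)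
    have hmax : ∀ n, ENNReal.ofReal (l n) ^ (m:ℝ) =
        max (EMetric.diam (C n) ^ (m:ℝ)) (ENNReal.ofReal (δ n) ^ (m:ℝ)) := by
      intro n
      rw [hLeq n, hmono.map_max]
    rcases Nat.eq_zero_or_pos m with hm | hm
    · have h1 : ∀ n, (if (C n).Nonempty then ENNReal.ofReal (l n) ^ (m:ℝ) else 0) =
          (⨆ _ : (C n).Nonempty, EMetric.diam (C n) ^ (m:ℝ)) := by
        intro n
        by_cases hne : (C n).Nonempty
        · simp [hne, hm]
        · simp [hne]
      rw [tsum_congr h1]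
      refine le_trans hsum.le (add_le_add_right ?_ μ)
      calc ENNReal.ofReal θ = 1 * ENNReal.ofReal θ := (one_mul _).symm
        _ ≤ 3 * ENNReal.ofReal θ := by gcongr; norm_num
    · have h1 : ∀ n, (if (C n).Nonempty then ENNReal.ofReal (l n) ^ (m:ℝ) else 0) ≤
          (⨆ _ : (C n).Nonempty, EMetric.diam (C n) ^ (m:ℝ)) + ENNReal.ofReal (δ n) := by
        intro n
        by_cases hne : (C n).Nonempty
        · simp only [hne, if_true, ciSup_pos]
          rw [hmax n]
          refine max_le le_self_add ?_
          refine le_add_left ?_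
          have hb1 : (ENNReal.ofReal (δ n)) ≤ 1 := by
            refine le_trans (ENNReal.ofReal_le_ofReal (le_trans (hδθ n) hθ1)) ?_
            simp
          calc ENNReal.ofReal (δ n) ^ (m:ℝ) ≤ ENNReal.ofReal (δ n) ^ (1:ℝ) :=
                ENNReal.rpow_le_rpow_of_exponent_ge hb1 (by exact_mod_cast hm)
            _ = ENNReal.ofReal (δ n) := ENNReal.rpow_one _
        · simp [hne]
      calc (∑' n, if (C n).Nonempty then ENNReal.ofReal (l n) ^ (m:ℝ) else 0)
          ≤ ∑' n, ((⨆ _ : (C n).Nonempty, EMetric.diam (C n) ^ (m:ℝ)) + ENNReal.ofReal (δ n)) :=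
            ENNReal.tsum_le_tsum h1
        _ = (∑' n, ⨆ _ : (C n).Nonempty, EMetric.diam (C n) ^ (m:ℝ)) +
            ∑' n, ENNReal.ofReal (δ n) := ENNReal.tsum_add
        _ ≤ (μ + ENNReal.ofReal θ) + 2 * ENNReal.ofReal θ := add_le_add hsum.le hδsum
        _ = μ + 3 * ENNReal.ofReal θ := by ring
  have hfinal : (ENNReal.ofReal t + 2 * ENNReal.ofReal θ) * (μ + 3 * ENNReal.ofReal θ) ≤
      ENNReal.ofReal t * μ + ε := by
    have hμeq : μ = ENNReal.ofReal μ.toReal := (ENNReal.ofReal_toReal hA).symm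
    have hkey : t * (3 * θ) + 2 * θ * μ.toReal + 2 * θ * (3 * θ) ≤ (ε : ℝ) := by
      have hθθ : θ * θ ≤ θ * 1 := by nlinarith
      have hDθ : θ * D = 3 * t * θ + 2 * θ * μ.toReal + 6 * θ := by rw [hDdef]; ring
      nlinarith [hθε, hθpos]
    have e2 : (2 : ℝ≥0∞) * ENNReal.ofReal θ = ENNReal.ofReal (2 * θ) := by
      rw [ENNReal.ofReal_mul (by norm_num)]; norm_num
    have e3 : (3 : ℝ≥0∞) * ENNReal.ofReal θ = ENNReal.ofReal (3 * θ) := by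
      rw [ENNReal.ofReal_mul (by norm_num)]; norm_num
    calc (ENNReal.ofReal t + 2 * ENNReal.ofReal θ) * (μ + 3 * ENNReal.ofReal θ)
        = ENNReal.ofReal t * μ + (ENNReal.ofReal t * (3 * ENNReal.ofReal θ) +
            2 * ENNReal.ofReal θ * μ + 2 * ENNReal.ofReal θ * (3 * ENNReal.ofReal θ)) := by
          ring
      _ ≤ ENNReal.ofReal t * μ + ε := by
          refine add_le_add_right ?_ _
          rw [hμeq, e2, e3, ← ENNReal.ofReal_mul ht, ← ENNReal.ofReal_mul (by positivity),
            ← ENNReal.ofReal_mul (by positivity), ← ENNReal.ofReal_add (by positivity)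
            (by positivity), ← ENNReal.ofReal_add (by positivity) (by positivity)]
          exact le_trans (ENNReal.ofReal_le_ofReal hkey) (by rw [ENNReal.ofReal_coe_nnreal])
  calc (∑' n, ⨆ _ : ((fun n => T (e n)) n).Nonempty, EMetric.diam ((fun n => T (e n)) n) ^ ((m:ℝ)+1))
      = ∑' p : ℕ × ℕ, ⨆ _ : (T p).Nonempty, EMetric.diam (T p) ^ ((m:ℝ)+1) :=
        e.tsum_eq (fun p => ⨆ _ : (T p).Nonempty, EMetric.diam (T p) ^ ((m:ℝ)+1))
    _ ≤ ∑' p : ℕ × ℕ, (if (C p.1).Nonempty ∧ p.2 < N p.1 then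
          ENNReal.ofReal (l p.1) ^ ((m:ℝ)+1) else 0) := ENNReal.tsum_le_tsum hstep1
    _ = ∑' (n : ℕ) (j : ℕ), (if (C n).Nonempty ∧ j < N n then
          ENNReal.ofReal (l n) ^ ((m:ℝ)+1) else 0) :=
        ENNReal.tsum_prod (f := fun a b => if (C a).Nonempty ∧ b < N a then
          ENNReal.ofReal (l a) ^ ((m:ℝ)+1) else 0)
    _ = ∑' n : ℕ, (if (C n).Nonempty then (N n : ℝ≥0∞) *
          ENNReal.ofReal (l n) ^ ((m:ℝ)+1) else 0) := by
        refine tsum_congr fun n => ?_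
        by_cases hne : (C n).Nonempty
        · simp only [hne, true_and, if_true]
          rw [tsum_eq_sum (s := Finset.range (N n))
            (fun j hj => by rw [if_neg (Finset.mem_range.not.1 hj)])]
          rw [Finset.sum_congr rfl (fun j hj => if_pos (Finset.mem_range.1 hj)),
            Finset.sum_const, Finset.card_range, nsmul_eq_mul]
        · simp [hne]
    _ ≤ ∑' n : ℕ, (if (C n).Nonempty then (ENNReal.ofReal t + 2 * ENNReal.ofReal θ) *
          (ENNReal.ofReal (l n) ^ (m:ℝ)) else 0) := by
        refine ENNReal.tsum_le_tsum fun n => ?_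
        by_cases hne : (C n).Nonempty
        · simp only [hne, if_true]
          have hsplit : ENNReal.ofReal (l n) ^ ((m:ℝ)+1) =
              ENNReal.ofReal (l n) ^ (m:ℝ) * ENNReal.ofReal (l n) := by
            rw [ENNReal.rpow_add _ _ (ENNReal.ofReal_pos.2 (hlpos n)).ne'
              ENNReal.ofReal_ne_top, ENNReal.rpow_one]
          rw [hsplit]
          calc (N n : ℝ≥0∞) * (ENNReal.ofReal (l n) ^ (m:ℝ) * ENNReal.ofReal (l n))
              = ((N n : ℝ≥0∞) * ENNReal.ofReal (l n)) * ENNReal.ofReal (l n) ^ (m:ℝ) := by ring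
            _ ≤ (ENNReal.ofReal t + 2 * ENNReal.ofReal θ) * ENNReal.ofReal (l n) ^ (m:ℝ) :=
                by gcongr; exact hNl n
        · simp [hne]
    _ = (ENNReal.ofReal t + 2 * ENNReal.ofReal θ) *
          ∑' n : ℕ, (if (C n).Nonempty then ENNReal.ofReal (l n) ^ (m:ℝ) else 0) := by
        rw [← ENNReal.tsum_mul_left]
        refine tsum_congr fun n => ?_
        by_cases hne : (C n).Nonempty <;> simp [hne]
    _ ≤ (ENNReal.ofReal t + 2 * ENNReal.ofReal θ) * (μ + 3 * ENNReal.ofReal θ) :=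
        by gcongr
    _ ≤ ENNReal.ofReal t * μ + ε := hfinal

lemma frontier_hit {E : Type*} [TopologicalSpace E] {γ : ℝ → E} (hγ : Continuous γ)
    {t : ℝ} (ht : 0 ≤ t) {S : Set E} (h0 : γ 0 ∈ S) (h1 : γ t ∉ S) :
    ∃ s ∈ Set.Icc (0:ℝ) t, γ s ∈ frontier S := by
  by_contra h
  push_neg at h
  have hpc := isPreconnected_Icc (a := (0:ℝ)) (b := t)
  have hsub : Set.Icc (0:ℝ) t ⊆ γ ⁻¹' (interior S) ∪ γ ⁻¹' (closure S)ᶜ := by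
    intro s hs
    by_cases hc : γ s ∈ closure S
    · left
      by_contra hint
      exact h s hs ⟨hc, hint⟩
    · right; exact hc
  have h0' : γ 0 ∈ interior S := by
    by_contra hint
    exact h 0 ⟨le_rfl, ht⟩ ⟨subset_closure h0, hint⟩
  have ht' : γ t ∈ (closure S)ᶜ := by
    intro hc
    exact h t ⟨ht, le_rfl⟩ ⟨hc, fun hi => h1 (interior_subset hi)⟩
  obtain ⟨z, _, hzu, hzv⟩ := hpc _ _ (isOpen_interior.preimage hγ)
    (isClosed_closure.isOpen_compl.preimage hγ) hsub ⟨0, ⟨le_rfl, ht⟩, h0'⟩ ⟨t, ⟨ht, le_rfl⟩, ht'⟩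
  exact hzv (subset_closure (interior_subset hzu))

lemma vol_le_H (n : ℕ) : (volume : Measure (EuclideanSpace ℝ (Fin n))) ≤ μH[(n:ℝ)] := by
  refine MeasureTheory.Measure.le_hausdorffMeasure _ _ ∞ (by simp) fun s _ => ?_
  have e := (EuclideanSpace.volume_preserving_symm_measurableEquiv_toLp (Fin n)).symm
  rw [← e.measure_preimage_equiv s]
  have h1 : (MeasurableEquiv.toLp 2 (Fin n → ℝ)).symm.symm ⁻¹' s
      = (WithLp.equiv 2 (Fin n → ℝ)) '' s := by
    rw [← MeasurableEquiv.image_eq_preimage_symm]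
    rfl
  calc volume ((MeasurableEquiv.toLp 2 (Fin n → ℝ)).symm.symm ⁻¹' s)
      ≤ EMetric.diam ((MeasurableEquiv.toLp 2 (Fin n → ℝ)).symm.symm ⁻¹' s) ^ Fintype.card (Fin n) :=
        Real.volume_pi_le_diam_pow _
    _ ≤ EMetric.diam s ^ (n : ℕ) := by
        rw [h1, Fintype.card_fin]
        refine pow_le_pow_left' ?_ n
        simpa [EMetric.diam] using (PiLp.lipschitzWith_ofLp 2 (fun _ : Fin n => ℝ)).ediam_image_le s
    _ = EMetric.diam s ^ (n : ℝ) := (ENNReal.rpow_natCast _ n).symm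

theorem stmt11 {m : ℕ} (S : Set (EuclideanSpace ℝ (Fin (m + 1))))
    (hS : μH[(m : ℝ)] (frontier S) < ⊤)
    (X : EuclideanSpace ℝ (Fin (m + 1)) → EuclideanSpace ℝ (Fin (m + 1))) (KX : NNReal)
    (hX : LipschitzWith KX X)
    (φ : ℝ → EuclideanSpace ℝ (Fin (m + 1)) → EuclideanSpace ℝ (Fin (m + 1)))
    (hφ0 : ∀ x, φ 0 x = x)
    (hode : ∀ x t, HasDerivAt (fun s => φ s x) (X (φ t x)) t)
    (hgroup : ∀ s r x, φ (s + r) x = φ s (φ r x))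
    (M : NNReal) (hM : LipschitzWith M (fun p : ℝ × EuclideanSpace ℝ (Fin (m + 1)) => φ p.1 p.2))
    (s₀ : ℝ) (hs₀ : 0 < s₀) (h2 : ∀ s : ℝ, |s| ≤ s₀ → LipschitzWith 2 (φ s))
    (t : ℝ) (ht0 : 0 ≤ t) (hts : t ≤ s₀) :
    (symmDiff (φ t '' S) S ⊆ ⋃ s ∈ Set.Icc 0 t, φ s '' frontier S) ∧
      volume (symmDiff (φ t '' S) S) ≤
        ENNReal.ofReal t * (max 2 (M : ℝ≥0∞)) ^ (m + 1) * μH[(m : ℝ)] (frontier S) := by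
  have hcont : ∀ x, Continuous fun s : ℝ => φ s x := fun x =>
    hM.continuous.comp (continuous_id.prodMk continuous_const)
  have hpart1 : symmDiff (φ t '' S) S ⊆ ⋃ s ∈ Set.Icc 0 t, φ s '' frontier S := by
    intro y hy
    rcases Set.mem_symmDiff.1 hy with ⟨hyA, hyS⟩ | ⟨hyS, hyA⟩
    · obtain ⟨x, hxS, rfl⟩ := hyA
      obtain ⟨s, hs, hfr⟩ := frontier_hit (hcont x) ht0 (by rw [hφ0]; exact hxS) hyS
      refine Set.mem_iUnion₂.2 ⟨t - s, ⟨by linarith [hs.2], by linarith [hs.1]⟩, φ s x, hfr, ?_⟩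
      rw [← hgroup, sub_add_cancel]
    · have hcont2 : Continuous fun s : ℝ => φ (-s) y := (hcont y).comp continuous_neg
      have hyt : φ (-t) y ∉ S := fun h =>
        hyA ⟨φ (-t) y, h, by rw [← hgroup, add_neg_cancel, hφ0]⟩
      obtain ⟨s, hs, hfr⟩ := frontier_hit hcont2 ht0 (by rw [neg_zero, hφ0]; exact hyS) hyt
      exact Set.mem_iUnion₂.2 ⟨s, hs, φ (-s) y, hfr, by rw [← hgroup, add_neg_cancel, hφ0]⟩
  refine ⟨hpart1, ?_⟩
  have hfr_ne : μH[(m:ℝ)] (frontier S) ≠ ⊤ := hS.ne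
  set U := ⋃ s ∈ Set.Icc (0:ℝ) t, φ s '' frontier S with hUdef
  have hU : U = (fun p : ℝ × EuclideanSpace ℝ (Fin (m + 1)) => φ p.1 p.2) ''
      (Set.Icc (0:ℝ) t ×ˢ frontier S) := by
    ext y
    simp only [hUdef, Set.mem_iUnion, Set.mem_image, Set.mem_prod, Prod.exists]
    constructor
    · rintro ⟨s, hs, x, hx, rfl⟩
      exact ⟨s, x, ⟨hs, hx⟩, rfl⟩
    · rintro ⟨s, x, ⟨hs, hx⟩, rfl⟩
      exact ⟨s, hs, x, hx, rfl⟩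
  have h1 : volume (symmDiff (φ t '' S) S) ≤ volume U := measure_mono hpart1
  have hvl : volume U ≤ μH[((m:ℝ)+1)] U := by
    have h := MeasureTheory.Measure.le_iff'.1 (vol_le_H (m+1)) U
    have hc : (((m+1 : ℕ)) : ℝ) = (m:ℝ) + 1 := by push_cast; ring
    rwa [hc] at h
  have h3 : μH[((m:ℝ)+1)] U ≤ (M:ℝ≥0∞) ^ ((m:ℝ)+1) *
      μH[((m:ℝ)+1)] (Set.Icc (0:ℝ) t ×ˢ frontier S) := by
    rw [hU]
    exact hM.hausdorffMeasure_image_le (by positivity) _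
  have h4 := prodIccHausdorff m (frontier S) hfr_ne ht0
  have h5 : (M:ℝ≥0∞) ^ ((m:ℝ)+1) ≤ (max 2 (M:ℝ≥0∞)) ^ (m + 1) := by
    rw [show ((m:ℝ)+1) = ((m+1 : ℕ) : ℝ) by push_cast; ring, ENNReal.rpow_natCast]
    exact pow_le_pow_left' (le_max_right _ _) _
  calc volume (symmDiff (φ t '' S) S) ≤ μH[((m:ℝ)+1)] U := le_trans h1 hvl
    _ ≤ (M:ℝ≥0∞) ^ ((m:ℝ)+1) * (ENNReal.ofReal t * μH[(m:ℝ)] (frontier S)) :=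
        le_trans h3 (by gcongr)
    _ = ENNReal.ofReal t * (M:ℝ≥0∞) ^ ((m:ℝ)+1) * μH[(m:ℝ)] (frontier S) := by ring
    _ ≤ ENNReal.ofReal t * (max 2 (M:ℝ≥0∞)) ^ (m + 1) * μH[(m:ℝ)] (frontier S) :=
        mul_le_mul' (by gcongr) le_rfl
end

section
/- Let z ∈ Δ(φ_t(S), S) for a set S ⊂ ℝⁿ and a flow φ of a Lipschitz vector field. Then there exist u ∈ [0, t] and m ∈ ∂S such that φ_u(m) = z. -/
lemma preconnected_inter_frontier {E : Type*} [TopologicalSpace E] {K S : Set E}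
    (hK : IsPreconnected K) (h1 : (K ∩ S).Nonempty) (h2 : (K \ S).Nonempty) :
    (K ∩ frontier S).Nonempty := by
  by_contra h
  rw [Set.not_nonempty_iff_eq_empty] at h
  obtain ⟨a, haK, haS⟩ := h1
  obtain ⟨b, hbK, hbS⟩ := h2
  have hsub : K ⊆ interior S ∪ interior Sᶜ := by
    intro x hx
    have hxf : x ∉ frontier S := fun hf => Set.eq_empty_iff_forall_notMem.mp h x ⟨hx, hf⟩
    by_cases hc : x ∈ closure S
    · left
      rw [frontier, Set.mem_diff] at hxf
      by_contra hI
      exact hxf ⟨hc, hI⟩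
    · exact Or.inr (by rwa [interior_compl, Set.mem_compl_iff])
  have haI : a ∈ interior S := by
    have : a ∈ interior S ∪ interior Sᶜ := hsub haK
    rcases this with h' | h'
    · exact h'
    · exact absurd haS (interior_subset h')
  have hbI : b ∈ interior Sᶜ := by
    have : b ∈ interior S ∪ interior Sᶜ := hsub hbK
    rcases this with h' | h'
    · exact absurd (interior_subset h') hbS
    · exact h'
  obtain ⟨x, hx⟩ := hK (interior S) (interior Sᶜ) isOpen_interior isOpen_interior hsub
    ⟨a, haK, haI⟩ ⟨b, hbK, hbI⟩
  exact (interior_subset hx.2.2 : (x : E) ∈ Sᶜ) (interior_subset hx.2.1)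

theorem stmt12 {m : ℕ} (S : Set (EuclideanSpace ℝ (Fin (m + 1))))
    (X : EuclideanSpace ℝ (Fin (m + 1)) → EuclideanSpace ℝ (Fin (m + 1))) (KX : NNReal)
    (hX : LipschitzWith KX X)
    (φ : ℝ → EuclideanSpace ℝ (Fin (m + 1)) → EuclideanSpace ℝ (Fin (m + 1)))
    (hφ0 : ∀ x, φ 0 x = x)
    (hode : ∀ x t, HasDerivAt (fun s => φ s x) (X (φ t x)) t)
    (hgroup : ∀ s r x, φ (s + r) x = φ s (φ r x))
    (t : ℝ) (ht : 0 ≤ t)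
    (z : EuclideanSpace ℝ (Fin (m + 1))) (hz : z ∈ symmDiff (φ t '' S) S) :
    ∃ u ∈ Set.Icc 0 t, ∃ p ∈ frontier S, φ u p = z := by
  -- the backwards trajectory
  set c : ℝ → EuclideanSpace ℝ (Fin (m + 1)) := fun s => φ (-s) z with hc
  have hcont : Continuous c := by
    have h1 : Continuous (fun s => φ s z) :=
      continuous_iff_continuousAt.mpr fun s => (hode z s).continuousAt
    exact h1.comp continuous_neg
  have hinv : ∀ s, φ s (c s) = z := by
    intro s
    have := hgroup s (-s) z
    simpa [hφ0] using this.symm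
  -- c 0 and c t lie on opposite sides of S
  have hsides : (c 0 ∈ S ∧ c t ∉ S) ∨ (c 0 ∉ S ∧ c t ∈ S) := by
    rcases Set.mem_symmDiff.mp hz with ⟨⟨x, hxS, hxz⟩, hzS⟩ | ⟨hzS, hznim⟩
    · right
      constructor
      · simpa [hc, hφ0] using hzS
      · have : c t = x := by
          have := hgroup (-t) t x
          simp only [neg_add_cancel, hφ0] at this
          simp [hc, ← hxz, ← this]
        rw [this]; exact hxS
    · left
      constructor
      · simpa [hc, hφ0] using hzS
      · intro hct
        exact hznim ⟨c t, hct, hinv t⟩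
  -- apply connectedness on the image of [0, t]
  have hpre : IsPreconnected (c '' Set.Icc 0 t) :=
    (isPreconnected_Icc).image c hcont.continuousOn
  have h1 : ((c '' Set.Icc 0 t) ∩ S).Nonempty := by
    rcases hsides with ⟨h, _⟩ | ⟨_, h⟩
    · exact ⟨c 0, ⟨0, Set.left_mem_Icc.mpr ht, rfl⟩, h⟩
    · exact ⟨c t, ⟨t, Set.right_mem_Icc.mpr ht, rfl⟩, h⟩
  have h2 : ((c '' Set.Icc 0 t) \ S).Nonempty := by
    rcases hsides with ⟨_, h⟩ | ⟨h, _⟩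
    · exact ⟨c t, ⟨t, Set.right_mem_Icc.mpr ht, rfl⟩, h⟩
    · exact ⟨c 0, ⟨0, Set.left_mem_Icc.mpr ht, rfl⟩, h⟩
  obtain ⟨y, ⟨u, hu, rfl⟩, hyf⟩ := preconnected_inter_frontier hpre h1 h2
  exact ⟨u, hu, c u, hyf, hinv u⟩
end

section
/- Let X be a Lipschitz vector field on ℝⁿ with ‖X‖_∞ < ∞ and flow φ_t, let w : ℝⁿ⁻¹ → ℝ be Lipschitz, V = {(x,z) : z > w(x)}, and define w_t(x) = inf{z : (x,z) ∈ φ_t(V)}. Then for almost every x (every point of differentiability of w): ∂_t|_{t=0⁺} w_t(x) = −⟨∇w(x), p₁(X(x, w(x)))⟩ + p₂(X(x, w(x))), where p₁, p₂ are the orthogonal projections onto ℝⁿ⁻¹ × {0} and {0}ⁿ⁻¹ × ℝ. -/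
open Set

lemma aux_mvt {F : Type*} [NormedAddCommGroup F] [NormedSpace ℝ F] {f f' : ℝ → F} {M t : ℝ}
    (ht : 0 ≤ t) (hd : ∀ s, HasDerivAt f (f' s) s)
    (hb : ∀ s ∈ Set.Icc 0 t, ‖f' s‖ ≤ M) : ‖f t - f 0‖ ≤ M * t := by
  have := Convex.norm_image_sub_le_of_norm_hasDerivWithin_le
    (f := f) (f' := f') (s := Set.Icc 0 t)
    (fun s _ => (hd s).hasDerivWithinAt) hb (convex_Icc 0 t)
    ⟨le_refl 0, ht⟩ ⟨ht, le_refl t⟩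
  simpa [Real.norm_eq_abs, abs_of_nonneg ht] using this

lemma aux_gronwall {F : Type*} [NormedAddCommGroup F] [NormedSpace ℝ F] {f f' : ℝ → F}
    {k t : ℝ} (ht : 0 ≤ t) (hd : ∀ s, HasDerivAt f (f' s) s)
    (hb : ∀ s ∈ Set.Icc 0 t, ‖f' s‖ ≤ k * ‖f s‖) :
    ‖f t‖ ≤ ‖f 0‖ * Real.exp (k * t) := by
  have := norm_le_gronwallBound_of_norm_deriv_right_le (f := f) (f' := f')
    (δ := ‖f 0‖) (K := k) (ε := 0) (a := 0) (b := t)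
    (fun s hs => ((hd s).continuousAt).continuousWithinAt)
    (fun s hs => (hd s).hasDerivWithinAt)
    le_rfl
    (fun s hs => by simpa using hb s ⟨hs.1, hs.2.le⟩)
    t ⟨le_refl 0 |>.trans ht, le_refl t⟩
  simpa [gronwallBound_ε0] using this

set_option maxHeartbeats 12000000

theorem stmt17 {m : ℕ}
    (X : EuclideanSpace ℝ (Fin m) × ℝ → EuclideanSpace ℝ (Fin m) × ℝ) (K : NNReal)
    (hX : LipschitzWith K X) (C : ℝ) (hXb : ∀ p, ‖X p‖ ≤ C)
    (φ : ℝ → EuclideanSpace ℝ (Fin m) × ℝ → EuclideanSpace ℝ (Fin m) × ℝ)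
    (hφ0 : ∀ p, φ 0 p = p)
    (hode : ∀ p t, HasDerivAt (fun s => φ s p) (X (φ t p)) t)
    (w : EuclideanSpace ℝ (Fin m) → ℝ) (Kw : NNReal) (hw : LipschitzWith Kw w)
    (x : EuclideanSpace ℝ (Fin m)) (hdiff : DifferentiableAt ℝ w x) :
    HasDerivWithinAt
      (fun t => sInf {z : ℝ |
        (x, z) ∈ φ t '' {p : EuclideanSpace ℝ (Fin m) × ℝ | w p.1 < p.2}})
      (-(fderiv ℝ w x (X (x, w x)).1) + (X (x, w x)).2) (Set.Ici 0) 0 := by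
  set k : ℝ := (K : ℝ) with hk
  set kw : ℝ := (Kw : ℝ) with hkw
  have k0 : 0 ≤ k := K.coe_nonneg
  have kw0 : 0 ≤ kw := Kw.coe_nonneg
  have hC : 0 ≤ C := le_trans (norm_nonneg _) (hXb (x, w x))
  have hXlip : ∀ p q : EuclideanSpace ℝ (Fin m) × ℝ, ‖X p - X q‖ ≤ k * ‖p - q‖ := by
    intro p q
    simpa [dist_eq_norm] using hX.dist_le_mul p q
  -- basic flow estimates
  have h1 : ∀ (p : EuclideanSpace ℝ (Fin m) × ℝ) (t : ℝ), 0 ≤ t → ‖φ t p - p‖ ≤ C * t := by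
    intro p t ht
    have := aux_mvt (f := fun s => φ s p) (f' := fun s => X (φ s p)) ht
      (fun s => hode p s) (fun s _ => hXb _)
    simpa [hφ0 p] using this
  have h2 : ∀ (p : EuclideanSpace ℝ (Fin m) × ℝ) (t : ℝ), 0 ≤ t → ‖φ t p - p - t • X p‖ ≤ k * C * t ^ 2 := by
    intro p t ht
    have hd : ∀ s : ℝ, HasDerivAt (fun s => φ s p - p - s • X p) (X (φ s p) - X p) s := by
      intro s
      have h1' : HasDerivAt (fun s : ℝ => φ s p - p) (X (φ s p)) s := (hode p s).sub_const p
      have h2' : HasDerivAt (fun s : ℝ => s • X p) (X p) s := by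
        simpa using (hasDerivAt_id s).smul_const (X p)
      exact h1'.sub h2'
    have hb : ∀ s ∈ Set.Icc (0:ℝ) t, ‖X (φ s p) - X p‖ ≤ k * C * t := by
      intro s hs
      calc ‖X (φ s p) - X p‖ ≤ k * ‖φ s p - p‖ := hXlip _ _
        _ ≤ k * (C * s) := by
            exact mul_le_mul_of_nonneg_left (h1 p s hs.1) k0
        _ ≤ k * C * t := by nlinarith [mul_nonneg (mul_nonneg k0 hC) (sub_nonneg.2 hs.2)]
    have := aux_mvt ht hd hb
    simp only [hφ0 p, zero_smul, sub_self, sub_zero] at this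
    calc ‖φ t p - p - t • X p‖ ≤ k * C * t * t := this
      _ = k * C * t ^ 2 := by ring
  have h3 : ∀ (p q : EuclideanSpace ℝ (Fin m) × ℝ) (t : ℝ), 0 ≤ t →
      ‖φ t p - φ t q‖ ≤ ‖p - q‖ * Real.exp (k * t) := by
    intro p q t ht
    have := aux_gronwall (f := fun s => φ s p - φ s q) (f' := fun s => X (φ s p) - X (φ s q)) ht
      (fun s => (hode p s).sub (hode q s))
      (fun s _ => by
        calc ‖X (φ s p) - X (φ s q)‖ ≤ k * ‖φ s p - φ s q‖ := hXlip _ _)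
    simpa [hφ0] using this
  have h4 : ∀ (p q : EuclideanSpace ℝ (Fin m) × ℝ) (t : ℝ), 0 ≤ t →
      ‖(φ t p - p) - (φ t q - q)‖ ≤ k * Real.exp (k * t) * ‖p - q‖ * t := by
    intro p q t ht
    have hd : ∀ s : ℝ, HasDerivAt (fun s => (φ s p - p) - (φ s q - q))
        (X (φ s p) - X (φ s q)) s :=
      fun s => ((hode p s).sub_const p).sub ((hode q s).sub_const q)
    have hb : ∀ s ∈ Set.Icc (0:ℝ) t, ‖X (φ s p) - X (φ s q)‖ ≤ k * Real.exp (k * t) * ‖p - q‖ := by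
      intro s hs
      calc ‖X (φ s p) - X (φ s q)‖ ≤ k * ‖φ s p - φ s q‖ := hXlip _ _
        _ ≤ k * (‖p - q‖ * Real.exp (k * s)) := mul_le_mul_of_nonneg_left (h3 p q s hs.1) k0
        _ ≤ k * Real.exp (k * t) * ‖p - q‖ := by
            have : Real.exp (k * s) ≤ Real.exp (k * t) :=
              Real.exp_le_exp.2 (by nlinarith [hs.2, hs.1])
            nlinarith [mul_nonneg (mul_nonneg k0 (norm_nonneg (p - q)))
              (sub_nonneg.2 this)]
    have := aux_mvt ht hd hb
    simpa [hφ0] using this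
  -- notation
  set wx : ℝ := w x with hwx
  set v : EuclideanSpace ℝ (Fin m) := (X (x, wx)).1 with hv
  set ξ : ℝ := (X (x, wx)).2 with hξ
  have hvC : ‖v‖ ≤ C := le_trans (norm_fst_le _) (hXb _)
  have hξC : |ξ| ≤ C := by
    have := le_trans (norm_snd_le (X (x, wx))) (hXb (x, wx))
    simpa [Real.norm_eq_abs] using this
  have hwlip : ∀ a b : EuclideanSpace ℝ (Fin m), |w a - w b| ≤ kw * ‖a - b‖ := by
    intro a b
    simpa [Real.dist_eq, dist_eq_norm] using hw.dist_le_mul a b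
  set S : ℝ → Set ℝ := fun t =>
    {z : ℝ | (x, z) ∈ φ t '' {p : EuclideanSpace ℝ (Fin m) × ℝ | w p.1 < p.2}} with hSdef
  set f : ℝ → ℝ := fun t => sInf (S t) with hfdef
  set g : ℝ → ℝ := fun t => w (x - t • v) + t * ξ with hgdef
  have hf0 : f 0 = wx := by
    have hS0 : S 0 = Set.Ioi wx := by
      ext z
      constructor
      · rintro ⟨p, hp, hpz⟩
        rw [hφ0] at hpz
        subst hpz
        exact hp
      · intro hz
        exact ⟨(x, z), hz, hφ0 _⟩
    rw [hfdef]
    simp only [hS0]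
    exact csInf_Ioi
  have hg0 : g 0 = wx := by simp [hgdef, hwx]
  -- derivative of g
  have hcurve : HasDerivAt (fun t : ℝ => x - t • v) (-v) 0 := by
    simpa using (((hasDerivAt_id (0:ℝ)).smul_const v).const_sub x)
  have hh : HasDerivAt (fun t : ℝ => w (x - t • v)) (-(fderiv ℝ w x v)) 0 := by
    have hbase : x - (0:ℝ) • v = x := by simp
    have hfd : HasFDerivAt w (fderiv ℝ w x) (x - (0:ℝ) • v) := by
      rw [hbase]; exact hdiff.hasFDerivAt
    have := hfd.comp_hasDerivAt 0 hcurve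
    simpa [map_neg, Function.comp_def] using this
  have hg' : HasDerivAt g (-(fderiv ℝ w x v) + ξ) 0 := hh.add (hasDerivAt_mul_const ξ)
  -- main quantitative bound
  obtain ⟨B, hB0, T, hT0, hmain⟩ :
      ∃ B ≥ (0:ℝ), ∃ T > (0:ℝ), ∀ t ∈ Set.Ioc (0:ℝ) T, |f t - g t| ≤ B * t ^ 2 := by
    -- constants
    have hexpk0 : (0:ℝ) < Real.exp k := Real.exp_pos k
    set Mc : ℝ := k * Real.exp k * (1 + kw) with hMcdef
    have hMc0 : 0 ≤ Mc := by positivity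
    set T : ℝ := min 1 (1 / (2 * Mc + 1)) with hTdef
    have hT0 : 0 < T := lt_min one_pos (by positivity)
    have hT1 : T ≤ 1 := min_le_left _ _
    have hcontr : Mc * T ≤ 1 / 2 := by
      have h2' : T ≤ 1 / (2 * Mc + 1) := min_le_right _ _
      have hpos : (0:ℝ) < 2 * Mc + 1 := by positivity
      have h8 : Mc * T ≤ Mc * (1 / (2 * Mc + 1)) := mul_le_mul_of_nonneg_left h2' hMc0
      rw [mul_one_div] at h8
      have h9 : Mc / (2 * Mc + 1) ≤ 1 / 2 := by
        rw [div_le_iff₀ hpos]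
        linarith only []
      linarith
    set c₆ : ℝ := C + kw * C + 1 with hc₆def
    have hc₆0 : 0 ≤ c₆ := by positivity
    set B₁ : ℝ := 1 + (1 + kw) * (k * c₆ + k * C) with hB₁def
    have hB₁0 : 0 ≤ B₁ := by positivity
    set c₂ : ℝ := kw * C + C + B₁ + 1 + k * C with hc₂def
    have hc₂0 : 0 ≤ c₂ := by positivity
    set c₃ : ℝ := C + c₂ with hc₃def
    have hc₃0 : 0 ≤ c₃ := by positivity
    set B₂ : ℝ := (1 + kw) * (k * c₃ + k * C) + 1 with hB₂def
    have hB₂0 : 0 ≤ B₂ := by positivity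
    -- upper bound
    have hupper : ∀ t ∈ Set.Ioc (0:ℝ) T, ∃ z ∈ S t, z ≤ g t + B₁ * t ^ 2 := by
      intro t ht
      obtain ⟨ht0, htT⟩ := ht
      have ht0' : (0:ℝ) ≤ t := ht0.le
      have ht1 : t ≤ 1 := le_trans htT hT1
      set P : EuclideanSpace ℝ (Fin m) → EuclideanSpace ℝ (Fin m) × ℝ :=
        fun y => (y, w y + t ^ 2) with hPdef
      have hPlip : ∀ y y', ‖P y - P y'‖ ≤ (1 + kw) * ‖y - y'‖ := by
        intro y y'
        have h2' : |w y - w y'| ≤ kw * ‖y - y'‖ := hwlip y y'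
        rw [Prod.norm_def]
        apply max_le
        · simp only [hPdef, Prod.fst_sub]
          linarith only [norm_nonneg (y - y'), mul_nonneg kw0 (norm_nonneg (y - y'))]
        · simp only [hPdef, Prod.snd_sub, Real.norm_eq_abs]
          have : (w y + t ^ 2) - (w y' + t ^ 2) = w y - w y' := by ring
          rw [this]
          linarith only [h2', norm_nonneg (y - y')]
      set G : EuclideanSpace ℝ (Fin m) → EuclideanSpace ℝ (Fin m) :=
        fun y => x - (φ t (P y)).1 + y with hGdef
      have hGlip : ∀ y y', ‖G y - G y'‖ ≤ (1/2) * ‖y - y'‖ := by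
        intro y y'
        have key := h4 (P y) (P y') t ht0'
        have hexp : Real.exp (k * t) ≤ Real.exp k :=
          Real.exp_le_exp.2 (by linarith only [mul_le_mul_of_nonneg_left ht1 k0])
        have hGd : G y - G y' = -(((φ t (P y) - P y) - (φ t (P y') - P y')).1) := by
          simp only [hGdef, hPdef, Prod.fst_sub]
          abel
        rw [hGd, norm_neg]
        have hfst := norm_fst_le ((φ t (P y) - P y) - (φ t (P y') - P y'))
        have he6 : (0:ℝ) ≤ k * Real.exp (k * t) := by positivity
        have e1 : k * Real.exp (k * t) * ‖P y - P y'‖ * t ≤ Mc * t * ‖y - y'‖ := by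
          calc k * Real.exp (k * t) * ‖P y - P y'‖ * t
              ≤ k * Real.exp (k * t) * ((1 + kw) * ‖y - y'‖) * t :=
                mul_le_mul_of_nonneg_right
                  (mul_le_mul_of_nonneg_left (hPlip y y') he6) ht0'
            _ ≤ k * Real.exp k * ((1 + kw) * ‖y - y'‖) * t := by
                have := mul_le_mul_of_nonneg_left hexp k0
                apply mul_le_mul_of_nonneg_right
                  (mul_le_mul_of_nonneg_right this (by positivity)) ht0'
            _ = Mc * t * ‖y - y'‖ := by rw [hMcdef]; ring
        have e2 : Mc * t * ‖y - y'‖ ≤ (1/2) * ‖y - y'‖ := by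
          apply mul_le_mul_of_nonneg_right _ (norm_nonneg _)
          calc Mc * t ≤ Mc * T := mul_le_mul_of_nonneg_left htT hMc0
            _ ≤ 1/2 := hcontr
        exact le_trans hfst (le_trans key (le_trans e1 e2))
      have hGlip' : LipschitzWith (1/2 : NNReal) G := by
        apply LipschitzWith.of_dist_le_mul
        intro y y'
        rw [dist_eq_norm, dist_eq_norm]
        refine le_trans (hGlip y y') (le_of_eq ?_)
        norm_num
      have hcon : ContractingWith (1/2 : NNReal) G :=
        ⟨by rw [← NNReal.coe_lt_coe]; norm_num, hGlip'⟩
      obtain ⟨y₀, hy₀fix, -, -⟩ := hcon.exists_fixedPoint x (edist_ne_top _ _)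
      have hfix1 : (φ t (P y₀)).1 = x := by
        have h' : x - (φ t (P y₀)).1 + y₀ = y₀ := hy₀fix
        have h'' : x - (φ t (P y₀)).1 = 0 := by
          have := congrArg (fun u => u - y₀) h'
          simpa using this
        have := sub_eq_zero.mp h''
        exact this.symm
      set p : EuclideanSpace ℝ (Fin m) × ℝ := P y₀ with hpdef
      set z : ℝ := (φ t p).2 with hzdef
      have hφtp : φ t p = (x, z) := Prod.ext_iff.2 ⟨hfix1, rfl⟩
      have hp1 : p.1 = y₀ := rfl
      have hp2 : p.2 = w y₀ + t ^ 2 := rfl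
      have hzmem : z ∈ S t := by
        refine ⟨p, ?_, hφtp⟩
        show w p.1 < p.2
        rw [hp1, hp2]
        exact lt_add_of_pos_right _ (by positivity)
      have he := h2 p t ht0'
      have he2 : |z - p.2 - t * (X p).2| ≤ k * C * t ^ 2 := by
        have hsnd := norm_snd_le (φ t p - p - t • X p)
        have heq : (φ t p - p - t • X p).2 = z - p.2 - t * (X p).2 := by
          simp [hzdef, Prod.snd_sub, smul_eq_mul]
        rw [heq, Real.norm_eq_abs] at hsnd
        exact hsnd.trans he
      have he1 : ‖(φ t p).1 - p.1 - t • (X p).1‖ ≤ k * C * t ^ 2 := by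
        have hfst := norm_fst_le (φ t p - p - t • X p)
        have heq : (φ t p - p - t • X p).1 = (φ t p).1 - p.1 - t • (X p).1 := by
          simp [Prod.fst_sub]
        rw [heq] at hfst
        exact hfst.trans he
      have hyx : ‖y₀ - x‖ ≤ C * t := by
        have hfst := (norm_fst_le (φ t p - p)).trans (h1 p t ht0')
        have heq : (φ t p - p).1 = x - y₀ := by
          rw [Prod.fst_sub, hfix1, hp1]
        rw [heq] at hfst
        rwa [norm_sub_rev] at hfst
      have hp2wx : |p.2 - wx| ≤ (kw * C + 1) * t := by
        have ha : |w y₀ - wx| ≤ kw * (C * t) :=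
          le_trans (hwlip y₀ x) (mul_le_mul_of_nonneg_left hyx kw0)
        have hb : p.2 - wx = (w y₀ - wx) + t ^ 2 := by rw [hp2]; ring
        rw [hb]
        have := abs_add_le (w y₀ - wx) (t ^ 2)
        have ht2 : |t ^ 2| ≤ t := by
          rw [abs_of_nonneg (sq_nonneg t)]
          linarith only [mul_le_mul_of_nonneg_left ht1 ht0']
        linarith only [ha, this, ht2]
      have hpnorm : ‖p - (x, wx)‖ ≤ c₆ * t := by
        rw [Prod.norm_def]
        apply max_le
        · have heq : (p - (x, wx)).1 = y₀ - x := by rw [Prod.fst_sub, hp1]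
          rw [heq]
          have hc₆t : c₆ * t = C * t + kw * C * t + t := by rw [hc₆def]; ring
          have hnn : 0 ≤ kw * C * t := by positivity
          linarith only [hyx, hc₆t, hnn, ht0']
        · have heq : (p - (x, wx)).2 = p.2 - wx := by rw [Prod.snd_sub]
          rw [heq, Real.norm_eq_abs]
          have hc₆t : c₆ * t = C * t + kw * C * t + t := by rw [hc₆def]; ring
          have hnn : 0 ≤ C * t := by positivity
          linarith only [hp2wx, hc₆t, hnn]
      have hXpb : ‖X p - X (x, wx)‖ ≤ k * (c₆ * t) :=
        le_trans (hXlip _ _) (mul_le_mul_of_nonneg_left hpnorm k0)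
      have hXp2 : |(X p).2 - ξ| ≤ k * (c₆ * t) := by
        have := (norm_snd_le (X p - X (x, wx))).trans hXpb
        simpa [Prod.snd_sub, Real.norm_eq_abs, hξ] using this
      have hXp1 : ‖(X p).1 - v‖ ≤ k * (c₆ * t) := by
        have := (norm_fst_le (X p - X (x, wx))).trans hXpb
        simpa [Prod.fst_sub, hv] using this
      have hy₀v : ‖y₀ - (x - t • v)‖ ≤ k * c₆ * t ^ 2 + k * C * t ^ 2 := by
        have heq : y₀ - (x - t • v)
            = -((φ t p).1 - p.1 - t • (X p).1) - t • ((X p).1 - v) := by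
          rw [hfix1, hp1, smul_sub]
          abel
        rw [heq]
        have h5 : ‖-((φ t p).1 - p.1 - t • (X p).1) - t • ((X p).1 - v)‖
            ≤ ‖(φ t p).1 - p.1 - t • (X p).1‖ + ‖t • ((X p).1 - v)‖ := by
          calc ‖-((φ t p).1 - p.1 - t • (X p).1) - t • ((X p).1 - v)‖
              ≤ ‖-((φ t p).1 - p.1 - t • (X p).1)‖ + ‖t • ((X p).1 - v)‖ :=
                norm_sub_le _ _
            _ = _ := by rw [norm_neg]
        have h6 : ‖t • ((X p).1 - v)‖ ≤ t * (k * (c₆ * t)) := by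
          rw [norm_smul, Real.norm_eq_abs, abs_of_nonneg ht0']
          exact mul_le_mul_of_nonneg_left hXp1 ht0'
        calc ‖-((φ t p).1 - p.1 - t • (X p).1) - t • ((X p).1 - v)‖
            ≤ ‖(φ t p).1 - p.1 - t • (X p).1‖ + ‖t • ((X p).1 - v)‖ := h5
          _ ≤ k * C * t ^ 2 + t * (k * (c₆ * t)) := add_le_add he1 h6
          _ = k * c₆ * t ^ 2 + k * C * t ^ 2 := by ring
      have hwy : w y₀ ≤ w (x - t • v) + kw * (k * c₆ * t ^ 2 + k * C * t ^ 2) := by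
        have h7 := hwlip y₀ (x - t • v)
        have h8 := mul_le_mul_of_nonneg_left hy₀v kw0
        have h9 := (abs_le.1 h7).2
        linarith
      have hstep : t * (X p).2 ≤ t * ξ + k * c₆ * t ^ 2 := by
        have h13 := mul_le_mul_of_nonneg_left (abs_le.1 hXp2).2 ht0'
        linarith only [h13]
      refine ⟨z, hzmem, ?_⟩
      have hz1 : z ≤ p.2 + t * (X p).2 + k * C * t ^ 2 := by
        have := (abs_le.1 he2).2
        linarith
      have hgt : g t = w (x - t • v) + t * ξ := rfl
      rw [hgt]
      rw [hp2] at hz1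
      have hB₁t : B₁ * t ^ 2
          = t ^ 2 + kw * (k * c₆ * t ^ 2 + k * C * t ^ 2) + k * c₆ * t ^ 2 + k * C * t ^ 2 := by
        rw [hB₁def]; ring
      linarith only [hz1, hwy, hstep, hB₁t]
    -- crude lower bound
    have hcrude : ∀ t ∈ Set.Ioc (0:ℝ) T, ∀ z ∈ S t,
        wx - (kw * C + C + k * C) * t ≤ z := by
      intro t ht z hz
      obtain ⟨ht0, htT⟩ := ht
      have ht0' : (0:ℝ) ≤ t := ht0.le
      have ht1 : t ≤ 1 := le_trans htT hT1
      obtain ⟨p, hpV, hφtp⟩ := hz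
      have hpV' : w p.1 < p.2 := hpV
      have he := h2 p t ht0'
      have hz2 : (φ t p).2 = z := by rw [hφtp]
      have he2 : |z - p.2 - t * (X p).2| ≤ k * C * t ^ 2 := by
        have hsnd := norm_snd_le (φ t p - p - t • X p)
        have heq : (φ t p - p - t • X p).2 = z - p.2 - t * (X p).2 := by
          simp [Prod.snd_sub, smul_eq_mul, hz2]
        rw [heq, Real.norm_eq_abs] at hsnd
        exact hsnd.trans he
      have hp1x : ‖p.1 - x‖ ≤ C * t := by
        have hfst := (norm_fst_le (φ t p - p)).trans (h1 p t ht0')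
        have heq : (φ t p - p).1 = x - p.1 := by
          rw [Prod.fst_sub, hφtp]
        rw [heq] at hfst
        rwa [norm_sub_rev] at hfst
      have hwp1 : wx - kw * (C * t) ≤ w p.1 := by
        have h7 := (abs_le.1 (hwlip p.1 x)).1
        have h8 := mul_le_mul_of_nonneg_left hp1x kw0
        linarith only [h7, h8]
      have hXp2C : |(X p).2| ≤ C := by
        have := (norm_snd_le (X p)).trans (hXb p)
        simpa [Real.norm_eq_abs] using this
      have htXp2 : -(C * t) ≤ t * (X p).2 := by
        have h13 := mul_le_mul_of_nonneg_left (abs_le.1 hXp2C).1 ht0'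
        linarith only [h13]
      have htsq : k * C * t ^ 2 ≤ k * C * t := by
        linarith only [mul_nonneg (mul_nonneg (mul_nonneg k0 hC) ht0') (sub_nonneg.2 ht1)]
      have h9 := (abs_le.1 he2).1
      linarith only [h9, hwp1, htXp2, htsq, hpV']
    -- refined lower bound
    have hlower : ∀ t ∈ Set.Ioc (0:ℝ) T, g t - B₂ * t ^ 2 ≤ f t := by
      intro t ht
      obtain ⟨ht0, htT⟩ := ht
      have ht0' : (0:ℝ) ≤ t := ht0.le
      have ht1 : t ≤ 1 := le_trans htT hT1
      have htsq : t ^ 2 ≤ t := by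
        linarith only [mul_le_mul_of_nonneg_left ht1 ht0']
      obtain ⟨z₁, hz₁S, hz₁le⟩ := hupper t ⟨ht0, htT⟩
      have hne : (S t).Nonempty := ⟨z₁, hz₁S⟩
      have hbdd : BddBelow (S t) :=
        ⟨wx - (kw * C + C + k * C) * t, fun z hz => hcrude t ⟨ht0, htT⟩ z hz⟩
      have hlt : sInf (S t) < f t + t ^ 2 :=
        lt_add_of_pos_right (f t) (by positivity)
      obtain ⟨z, hzS, hzlt⟩ := exists_lt_of_csInf_lt hne hlt
      have hfle : f t ≤ z₁ := csInf_le hbdd hz₁S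
      have hgb : |g t - wx| ≤ (kw * C + C) * t := by
        have h7 := hwlip (x - t • v) x
        have hnorm : ‖x - t • v - x‖ = t * ‖v‖ := by
          have heq : x - t • v - x = -(t • v) := by abel
          rw [heq, norm_neg, norm_smul, Real.norm_eq_abs, abs_of_nonneg ht0']
        rw [hnorm] at h7
        have hgt : g t = w (x - t • v) + t * ξ := rfl
        have h8 : |g t - wx| ≤ |w (x - t • v) - wx| + |t * ξ| := by
          rw [hgt]
          have heq : w (x - t • v) + t * ξ - wx = (w (x - t • v) - wx) + t * ξ := by ring
          rw [heq]
          exact abs_add_le _ _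
        have h9 : |t * ξ| ≤ t * C := by
          rw [abs_mul, abs_of_nonneg ht0']
          exact mul_le_mul_of_nonneg_left hξC ht0'
        have h10 : kw * (t * ‖v‖) ≤ kw * (t * C) :=
          mul_le_mul_of_nonneg_left (mul_le_mul_of_nonneg_left hvC ht0') kw0
        linarith only [h7, h8, h9, h10]
      have hB₁tt : B₁ * t ^ 2 ≤ B₁ * t := by
        linarith only [mul_nonneg (mul_nonneg hB₁0 ht0') (sub_nonneg.2 ht1)]

      have hzwx : |z - wx| ≤ c₂ * t := by
        have hup : z - wx ≤ (kw * C + C) * t + B₁ * t + t := by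
          have h11 := (abs_le.1 hgb).2
          linarith only [hzlt, hfle, hz₁le, h11, hB₁tt, htsq]
        have hlo : wx - (kw * C + C + k * C) * t ≤ z := hcrude t ⟨ht0, htT⟩ z hzS
        have hc₂t : c₂ * t = kw * C * t + C * t + B₁ * t + t + k * C * t := by
          rw [hc₂def]; ring
        rw [abs_le]
        constructor
        · linarith only [hlo, hc₂t, mul_nonneg hB₁0 ht0', ht0']
        · linarith only [hup, hc₂t, mul_nonneg (mul_nonneg k0 hC) ht0']
      obtain ⟨p, hpV, hφtp⟩ := hzS
      have hpV' : w p.1 < p.2 := hpV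
      have he := h2 p t ht0'
      have hz1c : (φ t p).1 = x := by rw [hφtp]
      have hz2c : (φ t p).2 = z := by rw [hφtp]
      have he2 : |z - p.2 - t * (X p).2| ≤ k * C * t ^ 2 := by
        have hsnd := norm_snd_le (φ t p - p - t • X p)
        have heq : (φ t p - p - t • X p).2 = z - p.2 - t * (X p).2 := by
          simp [Prod.snd_sub, smul_eq_mul, hz2c]
        rw [heq, Real.norm_eq_abs] at hsnd
        exact hsnd.trans he
      have he1 : ‖(φ t p).1 - p.1 - t • (X p).1‖ ≤ k * C * t ^ 2 := by
        have hfst := norm_fst_le (φ t p - p - t • X p)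
        have heq : (φ t p - p - t • X p).1 = (φ t p).1 - p.1 - t • (X p).1 := by
          simp [Prod.fst_sub]
        rw [heq] at hfst
        exact hfst.trans he
      have hp1x : ‖p.1 - x‖ ≤ C * t := by
        have hfst := (norm_fst_le (φ t p - p)).trans (h1 p t ht0')
        have heq : (φ t p - p).1 = x - p.1 := by rw [Prod.fst_sub, hz1c]
        rw [heq] at hfst
        rwa [norm_sub_rev] at hfst
      have hp2z : |p.2 - z| ≤ C * t := by
        have hsnd := (norm_snd_le (φ t p - p)).trans (h1 p t ht0')
        have heq : (φ t p - p).2 = z - p.2 := by rw [Prod.snd_sub, hz2c]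
        rw [heq, Real.norm_eq_abs, abs_sub_comm] at hsnd
        exact hsnd
      have hpnorm : ‖p - (x, wx)‖ ≤ c₃ * t := by
        rw [Prod.norm_def]
        have hc₃t : c₃ * t = C * t + c₂ * t := by rw [hc₃def]; ring
        apply max_le
        · have heq : (p - (x, wx)).1 = p.1 - x := by rw [Prod.fst_sub]
          rw [heq]
          linarith only [hp1x, hc₃t, mul_nonneg hc₂0 ht0']
        · have heq : (p - (x, wx)).2 = p.2 - wx := by rw [Prod.snd_sub]
          rw [heq, Real.norm_eq_abs]
          have h12 : |p.2 - wx| ≤ |p.2 - z| + |z - wx| := abs_sub_le _ _ _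
          linarith only [h12, hp2z, hzwx, hc₃t]
      have hXpb : ‖X p - X (x, wx)‖ ≤ k * (c₃ * t) :=
        le_trans (hXlip _ _) (mul_le_mul_of_nonneg_left hpnorm k0)
      have hXp2 : |(X p).2 - ξ| ≤ k * (c₃ * t) := by
        have := (norm_snd_le (X p - X (x, wx))).trans hXpb
        simpa [Prod.snd_sub, Real.norm_eq_abs, hξ] using this
      have hXp1 : ‖(X p).1 - v‖ ≤ k * (c₃ * t) := by
        have := (norm_fst_le (X p - X (x, wx))).trans hXpb
        simpa [Prod.fst_sub, hv] using this
      have hp1v : ‖p.1 - (x - t • v)‖ ≤ k * c₃ * t ^ 2 + k * C * t ^ 2 := by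
        have heq : p.1 - (x - t • v)
            = -((φ t p).1 - p.1 - t • (X p).1) - t • ((X p).1 - v) := by
          rw [hz1c, smul_sub]
          abel
        rw [heq]
        have h5 : ‖-((φ t p).1 - p.1 - t • (X p).1) - t • ((X p).1 - v)‖
            ≤ ‖(φ t p).1 - p.1 - t • (X p).1‖ + ‖t • ((X p).1 - v)‖ := by
          calc ‖-((φ t p).1 - p.1 - t • (X p).1) - t • ((X p).1 - v)‖
              ≤ ‖-((φ t p).1 - p.1 - t • (X p).1)‖ + ‖t • ((X p).1 - v)‖ :=
                norm_sub_le _ _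
            _ = _ := by rw [norm_neg]
        have h6 : ‖t • ((X p).1 - v)‖ ≤ t * (k * (c₃ * t)) := by
          rw [norm_smul, Real.norm_eq_abs, abs_of_nonneg ht0']
          exact mul_le_mul_of_nonneg_left hXp1 ht0'
        calc ‖-((φ t p).1 - p.1 - t • (X p).1) - t • ((X p).1 - v)‖
            ≤ ‖(φ t p).1 - p.1 - t • (X p).1‖ + ‖t • ((X p).1 - v)‖ := h5
          _ ≤ k * C * t ^ 2 + t * (k * (c₃ * t)) := add_le_add he1 h6
          _ = k * c₃ * t ^ 2 + k * C * t ^ 2 := by ring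
      have hwp1 : w (x - t • v) - kw * (k * c₃ * t ^ 2 + k * C * t ^ 2) ≤ w p.1 := by
        have h7 := (abs_le.1 (hwlip p.1 (x - t • v))).1
        have h8 := mul_le_mul_of_nonneg_left hp1v kw0
        linarith only [h7, h8]
      have hstep : t * ξ - k * c₃ * t ^ 2 ≤ t * (X p).2 := by
        have h13 := mul_le_mul_of_nonneg_left (abs_le.1 hXp2).1 ht0'
        linarith only [h13]
      have h9 := (abs_le.1 he2).1
      have hgt : g t = w (x - t • v) + t * ξ := rfl
      have hB₂t : B₂ * t ^ 2 = kw * (k * c₃ * t ^ 2 + k * C * t ^ 2)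
          + k * c₃ * t ^ 2 + k * C * t ^ 2 + t ^ 2 := by
        rw [hB₂def]; ring
      have hzf : z ≤ f t + t ^ 2 := hzlt.le
      rw [hgt]
      linarith only [h9, hwp1, hstep, hB₂t, hzf, hpV']
    -- combine
    refine ⟨B₁ + B₂, by positivity, T, hT0, ?_⟩
    intro t ht
    obtain ⟨z₁, hz₁S, hz₁le⟩ := hupper t ht
    have hbdd : BddBelow (S t) :=
      ⟨wx - (kw * C + C + k * C) * t, fun z hz => hcrude t ht z hz⟩
    have hup' : f t ≤ g t + B₁ * t ^ 2 := le_trans (csInf_le hbdd hz₁S) hz₁le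
    have hlo' := hlower t ht
    rw [abs_le]
    constructor
    · linarith only [hlo', mul_nonneg hB₁0 (sq_nonneg t)]
    · linarith only [hup', mul_nonneg hB₂0 (sq_nonneg t)]
  -- assemble
  have heB : ∀ᶠ t in nhdsWithin (0:ℝ) (Set.Ici 0), |f t - g t| ≤ B * t ^ 2 := by
    filter_upwards [Icc_mem_nhdsGE hT0] with t ht
    rcases eq_or_lt_of_le ht.1 with h | h
    · rw [← h]
      simp [hf0, hg0]
    · exact hmain t ⟨h, ht.2⟩
  have hE : HasDerivWithinAt (fun t => f t - g t) 0 (Set.Ici 0) 0 := by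
    rw [hasDerivWithinAt_iff_isLittleO]
    have h00 : f 0 - g 0 = 0 := by rw [hf0, hg0, sub_self]
    have hsimp : (fun t : ℝ => f t - g t - (f 0 - g 0) - (t - 0) • (0:ℝ))
        = fun t => f t - g t := by
      funext t
      rw [h00]
      simp
    rw [hsimp]
    have hbigO : (fun t : ℝ => f t - g t) =O[nhdsWithin 0 (Set.Ici 0)] fun t => t ^ 2 := by
      rw [Asymptotics.isBigO_iff]
      refine ⟨B, ?_⟩
      filter_upwards [heB] with t ht
      calc ‖f t - g t‖ ≤ B * t ^ 2 := ht
        _ ≤ B * ‖t ^ 2‖ := by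
            rw [Real.norm_eq_abs, abs_of_nonneg (sq_nonneg t)]
    have hlo : (fun t : ℝ => t ^ 2) =o[nhdsWithin 0 (Set.Ici 0)] fun t => t - 0 := by
      simp only [sub_zero]
      rw [Asymptotics.isLittleO_iff]
      intro c hc
      have habs : ∀ᶠ t : ℝ in nhdsWithin 0 (Set.Ici 0), |t| ≤ c := by
        have hball : Metric.closedBall (0:ℝ) c ∈ nhds (0:ℝ) :=
          Metric.closedBall_mem_nhds 0 hc
        filter_upwards [nhdsWithin_le_nhds hball] with t ht
        simpa [Real.dist_eq] using ht
      filter_upwards [habs] with t ht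
      rw [Real.norm_eq_abs, Real.norm_eq_abs, abs_pow, sq]
      exact mul_le_mul_of_nonneg_right ht (abs_nonneg t)
    exact hbigO.trans_isLittleO hlo
  have hsum := hE.add hg'.hasDerivWithinAt
  have hfun : ((fun t => f t - g t) + g) = f := funext fun t => sub_add_cancel _ _
  rw [hfun, zero_add] at hsum
  exact hsum
end
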